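/- The labelled red and white trees with the compositions ∘_x form a set-operad: (i) if x and y are two distinct labels of A, then (A ∘_x B) ∘_y C = (A ∘_y C) ∘_x B (where on each side the second composition is performed at the image of the label under the relabelling conventions); (ii) if x is a label of A and t is a label of B, then (A ∘_x B) ∘_t C = A ∘_x (B ∘_t C) (again at the image of t under the relabelling); (iii) the single-node tree labelled {1} is a two-sided unit for the compositions. -/

import Mathlib

open scoped Classical

/- A labelled red and white tree on `{1,…,n}` is encoded by the (laminar) family of the
sets `S(z)` of all labels carried by the subtree rooted at each node `z`; this determines
the tree completely (children of a node are the maximal proper members of the family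
below it, its own labels are those not appearing in its children, and the condition that
an unlabelled node has at least two children is automatic). -/

/-- The children of the node `S` in the family `fam`: maximal members strictly below `S`. -/
def childrenF (fam : Finset (Finset ℕ)) (S : Finset ℕ) : Finset (Finset ℕ) :=
  fam.filter fun T => T ⊂ S ∧ ∀ U ∈ fam, T ⊂ U → ¬ U ⊂ S

/-- The set of labels carried by the node `S` itself. -/
def labelsOf (fam : Finset (Finset ℕ)) (S : Finset ℕ) : Finset ℕ :=
  S \ (childrenF fam S).biUnion id

/-- `fam` encodes a labelled red and white tree on `{1,…,n}` (`fam ∈ BWTSL(n)`). -/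
def IsRWTree (n : ℕ) (fam : Finset (Finset ℕ)) : Prop :=
  (∀ S ∈ fam, S.Nonempty ∧ S ⊆ Finset.Icc 1 n) ∧
  Finset.Icc 1 n ∈ fam ∧
  ∀ S ∈ fam, ∀ T ∈ fam, S ⊆ T ∨ T ⊆ S ∨ Disjoint S T

/-- The tree is recursively labelled: the total label set of every subtree is an
interval of consecutive integers. -/
def IsRecursive (fam : Finset (Finset ℕ)) : Prop :=
  ∀ S ∈ fam, ∃ a b : ℕ, S = Finset.Icc a b

/-- The node `S` is red: it carries no label and all of its children are white. -/
def IsRed (fam : Finset (Finset ℕ)) (S : Finset ℕ) : Prop :=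
  labelsOf fam S = ∅ ∧ ∀ T ∈ childrenF fam S, ¬ IsRed fam T
termination_by S.card
decreasing_by
  rename_i hT
  exact Finset.card_lt_card (Finset.mem_filter.mp hT).2.1

/-- Relabelling of the first tree in `T₁ ∘ₓ T₂` (`n` the arity of `T₂`): labels `j > x`
are shifted by `n - 1` and the label `x` becomes the whole block `{x,…,x+n-1}`. -/
def relabL (x n : ℕ) (T : Finset ℕ) : Finset ℕ :=
  T.biUnion fun j =>
    if j < x then {j} else if j = x then Finset.Icc x (x + n - 1) else {j + n - 1}

/-- Relabelling of the second tree in `T₁ ∘ₓ T₂`: labels are shifted by `x - 1`. -/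
def relabR (x : ℕ) (T : Finset ℕ) : Finset ℕ := T.image fun j => x + j - 1

/-- The composition `T₁ ∘ₓ T₂` of labelled red and white trees (in the laminar-family
encoding), `n` being the arity of `T₂`.  The four cases correspond to the rules
(R1), (R3), (R2) and (W) respectively:  if the root of `T₂` is red then the result is
`T₂` when `T₁` is the single node labelled `x` (R1); the node `z` of `T₁` containing `x`
is deleted and the children of the root of `T₂` are attached to its parent when `z` is a
leaf whose only label is `x` (R3); otherwise the root of `T₂` becomes a new child of `z`
(R2).  If the root of `T₂` is not red, it is merged with `z` (W). -/
noncomputable def rwCompose (n x : ℕ) (fam₁ fam₂ : Finset (Finset ℕ)) :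
    Finset (Finset ℕ) :=
  let B : Finset ℕ := Finset.Icc x (x + n - 1)
  let f₁ := fam₁.image (relabL x n)
  let f₂ := fam₂.image (relabR x)
  if IsRed fam₂ (Finset.Icc 1 n) then
    if fam₁ = {{x}} then f₂
    else if {x} ∈ fam₁ then (f₁ \ {B}) ∪ (f₂ \ {B})
    else f₁ ∪ f₂
  else f₁ ∪ (f₂ \ {B})

/-- The unit: the single node labelled `{1}`. -/
def unitT : Finset (Finset ℕ) := {{1}}
/-- `T_≺`: white root labelled `{1}` with a single white child labelled `{2}`. -/
def Tprec : Finset (Finset ℕ) := {{1, 2}, {2}}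
/-- `T_≻`: white root labelled `{2}` with a single white child labelled `{1}`. -/
def Tsucc : Finset (Finset ℕ) := {{1, 2}, {1}}
/-- `T_∘`: a single white node labelled `{1,2}`. -/
def Tmid : Finset (Finset ℕ) := {{1, 2}}
/-- `T_⊙`: red empty root with two white children labelled `{1}` and `{2}`. -/
def Tdot : Finset (Finset ℕ) := {{1, 2}, {1}, {2}}

namespace RW

/-! ### Blockwise maps -/

def bimg (g : ℕ → Finset ℕ) (T : Finset ℕ) : Finset ℕ := T.biUnion g

structure BW (g : ℕ → Finset ℕ) : Prop where
  ne : ∀ j, (g j).Nonempty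
  disj : ∀ j j', j ≠ j' → Disjoint (g j) (g j')

variable {g g' : ℕ → Finset ℕ} {S T U : Finset ℕ}

lemma mem_bimg {i : ℕ} : i ∈ bimg g T ↔ ∃ j ∈ T, i ∈ g j := Finset.mem_biUnion

lemma BW.mem_unique (hg : BW g) {i j j'} (h : i ∈ g j) (h' : i ∈ g j') : j = j' := by
  by_contra hne
  exact Finset.disjoint_left.mp (hg.disj _ _ hne) h h'

lemma BW.bimg_subset (hg : BW g) : bimg g T ⊆ bimg g U ↔ T ⊆ U := by
  constructor
  · intro h j hj
    obtain ⟨i, hi⟩ := hg.ne j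
    obtain ⟨j', hj', hij'⟩ := mem_bimg.mp (h (mem_bimg.mpr ⟨j, hj, hi⟩))
    rwa [hg.mem_unique hi hij']
  · intro h i hi
    obtain ⟨j, hj, hij⟩ := mem_bimg.mp hi
    exact mem_bimg.mpr ⟨j, h hj, hij⟩

lemma BW.bimg_inj (hg : BW g) (h : bimg g T = bimg g U) : T = U :=
  Finset.Subset.antisymm ((hg.bimg_subset).mp h.le) ((hg.bimg_subset).mp h.ge)

lemma BW.bimg_ssubset (hg : BW g) : bimg g T ⊂ bimg g U ↔ T ⊂ U := by
  rw [Finset.ssubset_iff_subset_ne, Finset.ssubset_iff_subset_ne, hg.bimg_subset]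
  refine and_congr_right fun _ => ?_
  constructor
  · intro h h'; exact h (by rw [h'])
  · intro h h'; exact h (hg.bimg_inj h')

lemma BW.bimg_sdiff (hg : BW g) : bimg g (T \ U) = bimg g T \ bimg g U := by
  ext i
  simp only [mem_bimg, Finset.mem_sdiff]
  constructor
  · rintro ⟨j, hj, hij⟩
    refine ⟨⟨j, hj.1, hij⟩, ?_⟩
    rintro ⟨j', hj', hij'⟩
    exact hj.2 (hg.mem_unique hij hij' ▸ hj')
  · rintro ⟨⟨j, hj, hij⟩, h⟩
    exact ⟨j, ⟨hj, fun hj' => h ⟨j, hj', hij⟩⟩, hij⟩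

lemma BW.bimg_empty_iff (hg : BW g) : bimg g T = ∅ ↔ T = ∅ := by
  constructor
  · intro h
    by_contra hne
    obtain ⟨j, hj⟩ := Finset.nonempty_iff_ne_empty.mpr hne
    obtain ⟨i, hi⟩ := hg.ne j
    exact absurd h (Finset.nonempty_iff_ne_empty.mp ⟨i, mem_bimg.mpr ⟨j, hj, hi⟩⟩)
  · rintro rfl; rfl

lemma bimg_biUnion_id (F : Finset (Finset ℕ)) :
    (F.image (bimg g)).biUnion id = bimg g (F.biUnion id) := by
  ext i
  simp only [Finset.mem_biUnion, Finset.mem_image, mem_bimg, id]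
  constructor
  · rintro ⟨T, ⟨U, hU, rfl⟩, hi⟩
    obtain ⟨j, hj, hij⟩ := mem_bimg.mp hi
    exact ⟨j, ⟨U, hU, hj⟩, hij⟩
  · rintro ⟨j, ⟨U, hU, hj⟩, hij⟩
    exact ⟨bimg g U, ⟨U, hU, rfl⟩, mem_bimg.mpr ⟨j, hj, hij⟩⟩

lemma bimg_comp (S : Finset ℕ) :
    bimg g' (bimg g S) = bimg (fun j => bimg g' (g j)) S := by
  ext i
  simp only [mem_bimg]
  constructor
  · rintro ⟨j, hj, hij⟩
    obtain ⟨k, hk, hik⟩ := hj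
    exact ⟨k, hk, j, hik, hij⟩
  · rintro ⟨k, hk, j, hj, hij⟩
    exact ⟨j, ⟨k, hk, hj⟩, hij⟩

end RW
namespace RW

/-! ### The relabelling maps as blockwise maps -/

def blk (x n j : ℕ) : Finset ℕ :=
  if j < x then {j} else if j = x then Finset.Icc x (x + n - 1) else {j + n - 1}

def sng (x j : ℕ) : Finset ℕ := {x + j - 1}

lemma relabL_eq (x n : ℕ) (T : Finset ℕ) : relabL x n T = bimg (blk x n) T := rfl

lemma relabR_eq (x : ℕ) (T : Finset ℕ) : relabR x T = bimg (sng x) T := by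
  ext i
  simp [relabR, bimg, sng, Finset.mem_biUnion, eq_comm]

lemma mem_blk {x n j i : ℕ} (hn : 1 ≤ n) :
    i ∈ blk x n j ↔ (j < x ∧ i = j) ∨ (j = x ∧ x ≤ i ∧ i ≤ x + n - 1) ∨ (x < j ∧ i = j + n - 1) := by
  unfold blk
  split_ifs with h1 h2
  · simp only [Finset.mem_singleton]; omega
  · simp only [Finset.mem_Icc]; omega
  · simp only [Finset.mem_singleton]; omega

lemma BW_blk (x : ℕ) {n : ℕ} (hn : 1 ≤ n) : BW (blk x n) := by
  constructor
  · intro j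
    unfold blk
    split_ifs
    · exact ⟨j, Finset.mem_singleton_self j⟩
    · exact ⟨x, Finset.mem_Icc.mpr ⟨le_refl x, by omega⟩⟩
    · exact ⟨j + n - 1, Finset.mem_singleton_self _⟩
  · intro j j' hne
    rw [Finset.disjoint_left]
    intro i hi hi'
    rw [mem_blk hn] at hi hi'
    omega

lemma BW_sng {x : ℕ} (hx : 1 ≤ x) : BW (sng x) := by
  constructor
  · intro j; exact ⟨x + j - 1, Finset.mem_singleton_self _⟩
  · intro j j' hne
    rw [Finset.disjoint_left]
    intro i hi hi'
    simp only [sng, Finset.mem_singleton] at hi hi'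
    omega

lemma mem_relabL {x n : ℕ} (hn : 1 ≤ n) {S : Finset ℕ} {i : ℕ} :
    i ∈ relabL x n S ↔
      (∃ j ∈ S, j < x ∧ i = j) ∨ (x ∈ S ∧ x ≤ i ∧ i ≤ x + n - 1) ∨
        (∃ j ∈ S, x < j ∧ i = j + n - 1) := by
  rw [relabL_eq]
  simp only [mem_bimg, mem_blk hn]
  constructor
  · rintro ⟨j, hj, h | h | h⟩
    · exact Or.inl ⟨j, hj, h⟩
    · exact Or.inr (Or.inl ⟨h.1 ▸ hj, h.2⟩)
    · exact Or.inr (Or.inr ⟨j, hj, h⟩)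
  · rintro (⟨j, hj, h⟩ | ⟨hj, h⟩ | ⟨j, hj, h⟩)
    · exact ⟨j, hj, Or.inl h⟩
    · exact ⟨x, hj, Or.inr (Or.inl ⟨rfl, h⟩)⟩
    · exact ⟨j, hj, Or.inr (Or.inr h)⟩

lemma mem_relabR {x : ℕ} {S : Finset ℕ} {i : ℕ} :
    i ∈ relabR x S ↔ ∃ j ∈ S, i = x + j - 1 := by
  simp [relabR, eq_comm]

/-! ### Specific computations -/

lemma relabL_singleton_lt {x n j : ℕ} (h : j < x) : relabL x n {j} = {j} := by
  simp [relabL, h]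

lemma relabL_singleton_self (x n : ℕ) : relabL x n {x} = Finset.Icc x (x + n - 1) := by
  simp [relabL]

lemma relabL_singleton_gt {x n j : ℕ} (h : x < j) : relabL x n {j} = {j + n - 1} := by
  simp [relabL, Nat.lt_asymm h, Nat.ne_of_gt h]

lemma relabR_singleton (x j : ℕ) : relabR x {j} = {x + j - 1} := by simp [relabR]

lemma relabR_Icc {x u v : ℕ} (hx : 1 ≤ x) (hu : 1 ≤ u) :
    relabR x (Finset.Icc u v) = Finset.Icc (x + u - 1) (x + v - 1) := by
  ext i
  simp only [mem_relabR, Finset.mem_Icc]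
  constructor
  · rintro ⟨j, hj, rfl⟩; omega
  · intro h; exact ⟨i + 1 - x, by omega, by omega⟩

lemma relabL_Icc' {x n u v : ℕ} (hn : 1 ≤ n) (hu : u ≤ x) (hv : x ≤ v) :
    relabL x n (Finset.Icc u v) = Finset.Icc u (v + n - 1) := by
  ext i
  simp only [mem_relabL hn, Finset.mem_Icc]
  constructor
  · rintro (⟨j, hj, h⟩ | ⟨hj, h⟩ | ⟨j, hj, h⟩) <;> omega
  · intro h
    rcases lt_trichotomy i x with hc | hc | hc
    · exact Or.inl ⟨i, by omega, by omega⟩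
    · exact Or.inr (Or.inl (by omega))
    · rcases Nat.lt_or_ge (x + n - 1) i with hc2 | hc2
      · exact Or.inr (Or.inr ⟨i + 1 - n, by omega, by omega⟩)
      · exact Or.inr (Or.inl (by omega))

lemma relabL_Icc {x n m : ℕ} (hn : 1 ≤ n) (hx : 1 ≤ x) (hxm : x ≤ m) :
    relabL x n (Finset.Icc 1 m) = Finset.Icc 1 (m + n - 1) := by
  rw [relabL_Icc' hn hx hxm]

lemma relabL_id {a n : ℕ} {S : Finset ℕ} (h : ∀ i ∈ S, i < a) :
    relabL a n S = S := by
  ext i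
  rw [relabL_eq, mem_bimg]
  constructor
  · rintro ⟨j, hj, hij⟩
    have := h j hj
    unfold blk at hij
    rw [if_pos this, Finset.mem_singleton] at hij
    rwa [hij]
  · intro hi
    exact ⟨i, hi, by unfold blk; rw [if_pos (h i hi)]; exact Finset.mem_singleton_self i⟩

end RW
namespace RW

/-! ### Injectivity consequences and block facts -/

lemma relabL_inj {x n : ℕ} (hn : 1 ≤ n) {S T : Finset ℕ}
    (h : relabL x n S = relabL x n T) : S = T := by
  rw [relabL_eq, relabL_eq] at h
  exact (BW_blk x hn).bimg_inj h

lemma relabR_inj {x : ℕ} (hx : 1 ≤ x) {S T : Finset ℕ}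
    (h : relabR x S = relabR x T) : S = T := by
  rw [relabR_eq, relabR_eq] at h
  exact (BW_sng hx).bimg_inj h

lemma relabL_eq_iff {x n : ℕ} (hn : 1 ≤ n) {S T : Finset ℕ} :
    relabL x n S = relabL x n T ↔ S = T :=
  ⟨relabL_inj hn, fun h => by rw [h]⟩

lemma relabR_eq_iff {x : ℕ} (hx : 1 ≤ x) {S T : Finset ℕ} :
    relabR x S = relabR x T ↔ S = T :=
  ⟨relabR_inj hx, fun h => by rw [h]⟩

lemma relabL_subset_iff {x n : ℕ} (hn : 1 ≤ n) {S T : Finset ℕ} :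
    relabL x n S ⊆ relabL x n T ↔ S ⊆ T := by
  rw [relabL_eq, relabL_eq]; exact (BW_blk x hn).bimg_subset

lemma relabR_subset_iff {x : ℕ} (hx : 1 ≤ x) {S T : Finset ℕ} :
    relabR x S ⊆ relabR x T ↔ S ⊆ T := by
  rw [relabR_eq, relabR_eq]; exact (BW_sng hx).bimg_subset

lemma relabL_ssubset_iff {x n : ℕ} (hn : 1 ≤ n) {S T : Finset ℕ} :
    relabL x n S ⊂ relabL x n T ↔ S ⊂ T := by
  rw [relabL_eq, relabL_eq]; exact (BW_blk x hn).bimg_ssubset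

lemma relabR_ssubset_iff {x : ℕ} (hx : 1 ≤ x) {S T : Finset ℕ} :
    relabR x S ⊂ relabR x T ↔ S ⊂ T := by
  rw [relabR_eq, relabR_eq]; exact (BW_sng hx).bimg_ssubset

lemma relabL_empty_iff {x n : ℕ} (hn : 1 ≤ n) {S : Finset ℕ} :
    relabL x n S = ∅ ↔ S = ∅ := by
  rw [relabL_eq]; exact (BW_blk x hn).bimg_empty_iff

lemma relabR_empty_iff {x : ℕ} (hx : 1 ≤ x) {S : Finset ℕ} :
    relabR x S = ∅ ↔ S = ∅ := by
  rw [relabR_eq]; exact (BW_sng hx).bimg_empty_iff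

lemma relabL_nonempty {x n : ℕ} (hn : 1 ≤ n) {S : Finset ℕ} (h : S.Nonempty) :
    (relabL x n S).Nonempty := by
  rw [Finset.nonempty_iff_ne_empty] at h ⊢
  intro h'; exact h (relabL_empty_iff hn |>.mp h')

lemma relabR_nonempty {x : ℕ} (hx : 1 ≤ x) {S : Finset ℕ} (h : S.Nonempty) :
    (relabR x S).Nonempty := by
  rw [Finset.nonempty_iff_ne_empty] at h ⊢
  intro h'; exact h (relabR_empty_iff hx |>.mp h')

lemma relabR_eq_Icc {x n : ℕ} (hx : 1 ≤ x) :
    relabR x (Finset.Icc 1 n) = Finset.Icc x (x + n - 1) := by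
  have h : x + 1 - 1 = x := by omega
  rw [relabR_Icc hx le_rfl, h]

/-- `relabL x n S = B` iff `S = {x}`. -/
lemma relabL_eq_block_iff {x n : ℕ} (hn : 1 ≤ n) {S : Finset ℕ} :
    relabL x n S = Finset.Icc x (x + n - 1) ↔ S = {x} := by
  rw [← relabL_singleton_self x n, relabL_eq_iff hn]

/-- `relabR x S = B` iff `S = Icc 1 n`. -/
lemma relabR_eq_block_iff {x n : ℕ} (hx : 1 ≤ x) {S : Finset ℕ} :
    relabR x S = Finset.Icc x (x + n - 1) ↔ S = Finset.Icc 1 n := by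
  rw [← relabR_eq_Icc hx (n := n), relabR_eq_iff hx]

lemma relabR_eq_singleton_iff {x t : ℕ} (hx : 1 ≤ x) {S : Finset ℕ} :
    relabR x S = {x + t - 1} ↔ S = {t} := by
  rw [← relabR_singleton x t, relabR_eq_iff hx]

lemma block_subset_relabL {x n : ℕ} {S : Finset ℕ} (h : x ∈ S) :
    Finset.Icc x (x + n - 1) ⊆ relabL x n S := by
  intro i hi
  rw [relabL_eq, mem_bimg]
  exact ⟨x, h, by unfold blk; simp [hi]⟩

lemma relabL_disjoint_block {x n : ℕ} (hn : 1 ≤ n) {S : Finset ℕ} (h : x ∉ S) :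
    Disjoint (relabL x n S) (Finset.Icc x (x + n - 1)) := by
  rw [Finset.disjoint_left]
  intro i hi hi'
  rw [mem_relabL hn] at hi
  rw [Finset.mem_Icc] at hi'
  rcases hi with ⟨j, hj, h1, h2⟩ | ⟨hj, _⟩ | ⟨j, hj, h1, h2⟩
  · omega
  · exact h hj
  · omega

lemma relabR_subset_block {x n : ℕ} (hx : 1 ≤ x) {S : Finset ℕ}
    (hS : S ⊆ Finset.Icc 1 n) : relabR x S ⊆ Finset.Icc x (x + n - 1) := by
  intro i hi
  rw [mem_relabR] at hi
  obtain ⟨j, hj, rfl⟩ := hi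
  have := Finset.mem_Icc.mp (hS hj)
  rw [Finset.mem_Icc]
  omega

/-! ### Composition identities for the relabellings -/

lemma relabL_gt_Icc {x n u v : ℕ} (hn : 1 ≤ n) (h : x < u) :
    relabL x n (Finset.Icc u v) = Finset.Icc (u + n - 1) (v + n - 1) := by
  ext i
  simp only [mem_relabL hn, Finset.mem_Icc]
  constructor
  · rintro (⟨j, hj, h1⟩ | ⟨hj, h1⟩ | ⟨j, hj, h1⟩) <;> omega
  · intro hi
    exact Or.inr (Or.inr ⟨i + 1 - n, by omega, by omega⟩)

/-- I6 -/
lemma relabR_relabR {x t : ℕ} (hx : 1 ≤ x) (ht : 1 ≤ t) (S : Finset ℕ) :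
    relabR x (relabR t S) = relabR (x + t - 1) S := by
  simp only [relabR_eq, bimg_comp]
  apply Finset.biUnion_congr rfl
  intro j _
  show relabR x {t + j - 1} = _
  rw [relabR_singleton]
  unfold sng
  congr 1
  omega

/-- I7: `relabL x n` acts as a shift on sets of labels `> x`. -/
lemma relabL_relabR_gt {x n y : ℕ} (hn : 1 ≤ n) (hxy : x < y) {S : Finset ℕ}
    (hS : ∀ j ∈ S, 1 ≤ j) :
    relabL x n (relabR y S) = relabR (y + n - 1) S := by
  simp only [relabR_eq, relabL_eq, bimg_comp]
  apply Finset.biUnion_congr rfl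
  intro j hj
  show relabL x n {y + j - 1} = _
  rw [relabL_singleton_gt (by have := hS j hj; omega)]
  unfold sng
  congr 1
  have := hS j hj
  omega

/-- I1': `relabL a p` is the identity on the block `Icc x (x+n-1)` when `x+n-1 < a`. -/
lemma relabL_id_relabR {a p x : ℕ} {S : Finset ℕ} (hS : ∀ i ∈ S, i < a) :
    relabL a p S = S := relabL_id hS

/-- I3: parallel composition of left relabellings. -/
lemma relabL_relabL_parallel {x y n p : ℕ} (hn : 1 ≤ n) (hp : 1 ≤ p) (hxy : x < y)
    (S : Finset ℕ) :
    relabL (y + n - 1) p (relabL x n S) = relabL x n (relabL y p S) := by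
  simp only [relabL_eq, bimg_comp]
  apply Finset.biUnion_congr rfl
  intro j _
  show relabL (y + n - 1) p (blk x n j) = relabL x n (blk y p j)
  rcases lt_trichotomy j x with hc | hc | hc
  · rw [show blk x n j = {j} from by unfold blk; rw [if_pos hc],
      show blk y p j = {j} from by unfold blk; rw [if_pos (by omega)],
      relabL_singleton_lt (show j < y + n - 1 by omega), relabL_singleton_lt hc]
  · subst hc
    rw [show blk j n j = Finset.Icc j (j + n - 1) from by unfold blk; simp,
      show blk y p j = {j} from by unfold blk; rw [if_pos hxy],
      relabL_singleton_self,
      relabL_id (fun i hi => by rw [Finset.mem_Icc] at hi; omega)]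
  · rw [show blk x n j = {j + n - 1} from by unfold blk; rw [if_neg (by omega), if_neg (by omega)]]
    rcases lt_trichotomy j y with hc2 | hc2 | hc2
    · rw [show blk y p j = {j} from by unfold blk; rw [if_pos hc2],
        relabL_singleton_lt (show j + n - 1 < y + n - 1 by omega),
        relabL_singleton_gt hc]
    · subst hc2
      rw [show blk j p j = Finset.Icc j (j + p - 1) from by unfold blk; simp,
        relabL_singleton_self, relabL_gt_Icc hn hc]
      congr 1 <;> omega
    · rw [show blk y p j = {j + p - 1} from by unfold blk; rw [if_neg (by omega), if_neg (by omega)],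
        relabL_singleton_gt (show y + n - 1 < j + n - 1 by omega),
        relabL_singleton_gt (show x < j + p - 1 by omega)]
      congr 1
      omega

/-- I4: nested composition of left relabellings. -/
lemma relabL_relabL_nested {x t n p : ℕ} (hx : 1 ≤ x) (ht : 1 ≤ t) (htn : t ≤ n)
    (hp : 1 ≤ p) (S : Finset ℕ) :
    relabL (x + t - 1) p (relabL x n S) = relabL x (n + p - 1) S := by
  simp only [relabL_eq, bimg_comp]
  apply Finset.biUnion_congr rfl
  intro j _
  show relabL (x + t - 1) p (blk x n j) = blk x (n + p - 1) j
  rcases lt_trichotomy j x with hc | hc | hc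
  · rw [show blk x n j = {j} from by unfold blk; rw [if_pos hc],
      show blk x (n + p - 1) j = {j} from by unfold blk; rw [if_pos hc],
      relabL_singleton_lt (show j < x + t - 1 by omega)]
  · subst hc
    rw [show blk j n j = Finset.Icc j (j + n - 1) from by unfold blk; simp,
      show blk j (n + p - 1) j = Finset.Icc j (j + (n + p - 1) - 1) from by unfold blk; simp,
      relabL_Icc' hp (by omega) (by omega)]
    congr 1
    omega
  · rw [show blk x n j = {j + n - 1} from by unfold blk; rw [if_neg (by omega), if_neg (by omega)],
      show blk x (n + p - 1) j = {j + (n + p - 1) - 1} from by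
        unfold blk; rw [if_neg (by omega), if_neg (by omega)],
      relabL_singleton_gt (show x + t - 1 < j + n - 1 by omega)]
    congr 1
    omega

/-- I5: mixed nested identity. -/
lemma relabL_relabR_nested {x t p : ℕ} (hx : 1 ≤ x) (ht : 1 ≤ t) (hp : 1 ≤ p)
    (S : Finset ℕ) :
    relabL (x + t - 1) p (relabR x S) = relabR x (relabL t p S) := by
  simp only [relabR_eq, relabL_eq, bimg_comp]
  apply Finset.biUnion_congr rfl
  intro j _
  rw [← relabL_eq, ← relabR_eq]
  show relabL (x + t - 1) p {x + j - 1} = relabR x (blk t p j)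
  rcases lt_trichotomy j t with hc | hc | hc
  · rw [show blk t p j = {j} from by unfold blk; rw [if_pos hc], relabR_singleton,
      relabL_singleton_lt (show x + j - 1 < x + t - 1 by omega)]
  · subst hc
    rw [show blk j p j = Finset.Icc j (j + p - 1) from by unfold blk; simp,
      relabL_singleton_self, relabR_Icc hx ht]
    congr 1 <;> omega
  · rw [show blk t p j = {j + p - 1} from by unfold blk; rw [if_neg (by omega), if_neg (by omega)],
      relabR_singleton,
      relabL_singleton_gt (show x + t - 1 < x + j - 1 by omega)]
    congr 1
    omega

end RW
namespace RW

/-! ### Generic facts about `childrenF`, `labelsOf`, `IsRed` -/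

lemma IsRed_iff (fam : Finset (Finset ℕ)) (S : Finset ℕ) :
    IsRed fam S ↔ labelsOf fam S = ∅ ∧ ∀ T ∈ childrenF fam S, ¬ IsRed fam T := by
  rw [IsRed]

lemma mem_childrenF {fam : Finset (Finset ℕ)} {S T : Finset ℕ} :
    T ∈ childrenF fam S ↔ T ∈ fam ∧ T ⊂ S ∧ ∀ U ∈ fam, T ⊂ U → ¬ U ⊂ S := by
  unfold childrenF
  rw [Finset.mem_filter]

lemma childrenF_ssubset {fam : Finset (Finset ℕ)} {S T : Finset ℕ}
    (h : T ∈ childrenF fam S) : T ⊂ S := (mem_childrenF.mp h).2.1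

/-- Every proper member of the family below `S` lies inside a child of `S`. -/
lemma exists_child {fam : Finset (Finset ℕ)} {S T : Finset ℕ}
    (hT : T ∈ fam) (hTS : T ⊂ S) : ∃ c ∈ childrenF fam S, T ⊆ c := by
  classical
  -- take a member of fam between T and S of maximal cardinality
  have hne : (fam.filter fun U => T ⊆ U ∧ U ⊂ S).Nonempty :=
    ⟨T, Finset.mem_filter.mpr ⟨hT, le_refl T, hTS⟩⟩
  obtain ⟨c, hc, hcmax⟩ := Finset.exists_max_image _ (fun U => U.card) hne
  rw [Finset.mem_filter] at hc
  refine ⟨c, mem_childrenF.mpr ⟨hc.1, hc.2.2, ?_⟩, hc.2.1⟩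
  intro U hU hcU hUS
  have hUmem : U ∈ fam.filter fun U => T ⊆ U ∧ U ⊂ S :=
    Finset.mem_filter.mpr ⟨hU, hc.2.1.trans hcU.subset, hUS⟩
  have := hcmax U hUmem
  exact absurd this (by have := Finset.card_lt_card hcU; omega)

/-- the children of a node are determined by the members of the family below it. -/
lemma childrenF_congr {fam fam' : Finset (Finset ℕ)} {S : Finset ℕ}
    (h : ∀ T, T ⊆ S → (T ∈ fam ↔ T ∈ fam')) :
    childrenF fam S = childrenF fam' S := by
  ext T
  simp only [mem_childrenF]
  constructor
  · rintro ⟨h1, h2, h3⟩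
    refine ⟨(h T h2.subset).mp h1, h2, ?_⟩
    intro U hU hTU hUS
    exact h3 U ((h U hUS.subset).mpr hU) hTU hUS
  · rintro ⟨h1, h2, h3⟩
    refine ⟨(h T h2.subset).mpr h1, h2, ?_⟩
    intro U hU hTU hUS
    exact h3 U ((h U hUS.subset).mp hU) hTU hUS

lemma labelsOf_congr {fam fam' : Finset (Finset ℕ)} {S : Finset ℕ}
    (h : ∀ T, T ⊆ S → (T ∈ fam ↔ T ∈ fam')) :
    labelsOf fam S = labelsOf fam' S := by
  unfold labelsOf
  rw [childrenF_congr h]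

lemma isRed_congr_aux : ∀ (k : ℕ) (fam fam' : Finset (Finset ℕ)) (S : Finset ℕ),
    S.card ≤ k → (∀ T, T ⊆ S → (T ∈ fam ↔ T ∈ fam')) →
    (IsRed fam S ↔ IsRed fam' S) := by
  intro k
  induction k with
  | zero =>
    intro fam fam' S hS h
    rw [IsRed_iff, IsRed_iff, labelsOf_congr h, childrenF_congr h]
    have : ∀ T ∈ childrenF fam' S, ¬ IsRed fam T ↔ ¬ IsRed fam' T := by
      intro T hT
      have := childrenF_ssubset hT
      have := Finset.card_lt_card this
      omega
    constructor <;> rintro ⟨h1, h2⟩ <;> refine ⟨h1, fun T hT => ?_⟩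
    · exact (this T hT).mp (h2 T hT)
    · exact (this T hT).mpr (h2 T hT)
  | succ k ih =>
    intro fam fam' S hS h
    rw [IsRed_iff, IsRed_iff, labelsOf_congr h, childrenF_congr h]
    refine and_congr Iff.rfl ?_
    refine forall₂_congr fun T hT => ?_
    have hTS := childrenF_ssubset hT
    have hcard : T.card ≤ k := by have := Finset.card_lt_card hTS; omega
    have hrec := ih fam fam' T hcard fun U hU => h U (hU.trans hTS.subset)
    rw [hrec]

lemma isRed_congr {fam fam' : Finset (Finset ℕ)} {S : Finset ℕ}
    (h : ∀ T, T ⊆ S → (T ∈ fam ↔ T ∈ fam')) :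
    (IsRed fam S ↔ IsRed fam' S) :=
  isRed_congr_aux S.card fam fam' S le_rfl h

/-! ### Transport of `IsRed` along a blockwise map -/

variable {g : ℕ → Finset ℕ}

lemma childrenF_image (hg : BW g) (fam : Finset (Finset ℕ)) (S : Finset ℕ) :
    childrenF (fam.image (bimg g)) (bimg g S) = (childrenF fam S).image (bimg g) := by
  ext T
  simp only [mem_childrenF, Finset.mem_image]
  constructor
  · rintro ⟨⟨U, hU, rfl⟩, h2, h3⟩
    refine ⟨U, ⟨hU, hg.bimg_ssubset.mp h2, ?_⟩, rfl⟩
    intro V hV hUV hVS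
    exact h3 (bimg g V) ⟨V, hV, rfl⟩ (hg.bimg_ssubset.mpr hUV) (hg.bimg_ssubset.mpr hVS)
  · rintro ⟨U, hU, rfl⟩
    refine ⟨⟨U, hU.1, rfl⟩, hg.bimg_ssubset.mpr hU.2.1, ?_⟩
    rintro V ⟨W, hW, rfl⟩ hUW hWS
    exact hU.2.2 W hW (hg.bimg_ssubset.mp hUW) (hg.bimg_ssubset.mp hWS)

lemma labelsOf_image (hg : BW g) (fam : Finset (Finset ℕ)) (S : Finset ℕ) :
    labelsOf (fam.image (bimg g)) (bimg g S) = bimg g (labelsOf fam S) := by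
  unfold labelsOf
  rw [childrenF_image hg, bimg_biUnion_id, hg.bimg_sdiff]

lemma isRed_image_aux (hg : BW g) : ∀ (k : ℕ) (fam : Finset (Finset ℕ)) (S : Finset ℕ),
    S.card ≤ k → (IsRed (fam.image (bimg g)) (bimg g S) ↔ IsRed fam S) := by
  intro k
  induction k with
  | zero =>
    intro fam S hS
    have hS0 : S = ∅ := Finset.card_eq_zero.mp (le_antisymm hS (Nat.zero_le _))
    subst hS0
    rw [IsRed_iff, IsRed_iff, labelsOf_image hg, childrenF_image hg, hg.bimg_empty_iff]
    have hch : childrenF fam (∅ : Finset ℕ) = ∅ := by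
      ext T
      simp only [mem_childrenF, Finset.notMem_empty, iff_false, not_and]
      intro _ h2
      exact absurd h2 (by simp)
    rw [hch]
    simp
  | succ k ih =>
    intro fam S hS
    rw [IsRed_iff, IsRed_iff, labelsOf_image hg, childrenF_image hg, hg.bimg_empty_iff]
    refine and_congr Iff.rfl ?_
    constructor
    · intro h T hT
      have hTS := childrenF_ssubset hT
      have hcard : T.card ≤ k := by have := Finset.card_lt_card hTS; omega
      rw [← ih fam T hcard]
      exact h (bimg g T) (Finset.mem_image_of_mem _ hT)
    · rintro h T' hT'
      rw [Finset.mem_image] at hT'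
      obtain ⟨T, hT, rfl⟩ := hT'
      have hTS := childrenF_ssubset hT
      have hcard : T.card ≤ k := by have := Finset.card_lt_card hTS; omega
      rw [ih fam T hcard]
      exact h T hT

lemma isRed_image (hg : BW g) (fam : Finset (Finset ℕ)) (S : Finset ℕ) :
    IsRed (fam.image (bimg g)) (bimg g S) ↔ IsRed fam S :=
  isRed_image_aux hg S.card fam S le_rfl

end RW
namespace RW

/-! ### Membership description of the composition -/

def keepB (n x : ℕ) (fam₁ fam₂ : Finset (Finset ℕ)) : Prop :=
  if IsRed fam₂ (Finset.Icc 1 n) then ({x} ∉ fam₁ ∨ fam₁ = {{x}}) else {x} ∈ fam₁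

lemma mem_rwCompose {n x : ℕ} (hx : 1 ≤ x) (hn : 1 ≤ n)
    {fam₁ fam₂ : Finset (Finset ℕ)} (hroot : Finset.Icc 1 n ∈ fam₂)
    {T : Finset ℕ} :
    T ∈ rwCompose n x fam₁ fam₂ ↔
      (∃ S ∈ fam₁, S ≠ {x} ∧ T = relabL x n S) ∨
      (∃ S ∈ fam₂, S ≠ Finset.Icc 1 n ∧ T = relabR x S) ∨
      (T = Finset.Icc x (x + n - 1) ∧ keepB n x fam₁ fam₂) := by
  have hL : ∀ S : Finset ℕ, relabL x n S = Finset.Icc x (x + n - 1) ↔ S = {x} :=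
    fun S => relabL_eq_block_iff hn
  have hR : ∀ S : Finset ℕ, relabR x S = Finset.Icc x (x + n - 1) ↔ S = Finset.Icc 1 n :=
    fun S => relabR_eq_block_iff hx
  have hRB : relabR x (Finset.Icc 1 n) = Finset.Icc x (x + n - 1) := relabR_eq_Icc hx
  unfold rwCompose keepB
  simp only []
  split_ifs with h1 h2 h3
  · -- red, fam₁ = {{x}}
    subst h2
    simp only [Finset.mem_image]
    constructor
    · rintro ⟨S, hS, rfl⟩
      by_cases hS' : S = Finset.Icc 1 n
      · subst hS'; exact Or.inr (Or.inr ⟨hRB, by right; trivial⟩)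
      · exact Or.inr (Or.inl ⟨S, hS, hS', rfl⟩)
    · rintro (⟨S, hS, hne, rfl⟩ | ⟨S, hS, _, rfl⟩ | ⟨rfl, _⟩)
      · simp only [Finset.mem_singleton] at hS; exact absurd hS hne
      · exact ⟨S, hS, rfl⟩
      · exact ⟨Finset.Icc 1 n, hroot, hRB⟩
  · -- red, {x} ∈ fam₁, fam₁ ≠ {{x}}
    simp only [Finset.mem_union, Finset.mem_sdiff, Finset.mem_image, Finset.mem_singleton]
    constructor
    · rintro (⟨⟨S, hS, rfl⟩, hne⟩ | ⟨⟨S, hS, rfl⟩, hne⟩)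
      · exact Or.inl ⟨S, hS, fun h => hne ((hL S).mpr h), rfl⟩
      · exact Or.inr (Or.inl ⟨S, hS, fun h => hne ((hR S).mpr (h ▸ rfl)), rfl⟩)
    · rintro (⟨S, hS, hne, rfl⟩ | ⟨S, hS, hne, rfl⟩ | ⟨rfl, h | h⟩)
      · exact Or.inl ⟨⟨S, hS, rfl⟩, fun h => hne ((hL S).mp h)⟩
      · exact Or.inr ⟨⟨S, hS, rfl⟩, fun h => hne ((hR S).mp h)⟩
      · exact absurd h3 h
      · exact absurd h h2
  · -- red, {x} ∉ fam₁
    simp only [Finset.mem_union, Finset.mem_image]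
    constructor
    · rintro (⟨S, hS, rfl⟩ | ⟨S, hS, rfl⟩)
      · refine Or.inl ⟨S, hS, fun h => h3 (h ▸ hS), rfl⟩
      · by_cases hS' : S = Finset.Icc 1 n
        · subst hS'; exact Or.inr (Or.inr ⟨hRB, Or.inl h3⟩)
        · exact Or.inr (Or.inl ⟨S, hS, hS', rfl⟩)
    · rintro (⟨S, hS, _, rfl⟩ | ⟨S, hS, _, rfl⟩ | ⟨rfl, _⟩)
      · exact Or.inl ⟨S, hS, rfl⟩
      · exact Or.inr ⟨S, hS, rfl⟩
      · exact Or.inr ⟨Finset.Icc 1 n, hroot, hRB⟩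
  · -- not red
    simp only [Finset.mem_union, Finset.mem_sdiff, Finset.mem_image, Finset.mem_singleton]
    constructor
    · rintro (⟨S, hS, rfl⟩ | ⟨⟨S, hS, rfl⟩, hne⟩)
      · by_cases hS' : S = {x}
        · subst hS'; exact Or.inr (Or.inr ⟨relabL_singleton_self x n, hS⟩)
        · exact Or.inl ⟨S, hS, hS', rfl⟩
      · exact Or.inr (Or.inl ⟨S, hS, fun h => hne ((hR S).mpr (h ▸ rfl)), rfl⟩)
    · rintro (⟨S, hS, hne, rfl⟩ | ⟨S, hS, hne, rfl⟩ | ⟨rfl, h⟩)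
      · exact Or.inl ⟨S, hS, rfl⟩
      · exact Or.inr ⟨⟨S, hS, rfl⟩, fun h => hne ((hR S).mp h)⟩
      · exact Or.inl ⟨{x}, h, relabL_singleton_self x n⟩

/-! ### basic consequences for composites -/

lemma rwCompose_nonempty {n x : ℕ} (hx : 1 ≤ x) (hn : 1 ≤ n)
    {fam₁ fam₂ : Finset (Finset ℕ)} (hroot : Finset.Icc 1 n ∈ fam₂)
    (h₁ : ∀ S ∈ fam₁, S.Nonempty) (h₂ : ∀ S ∈ fam₂, S.Nonempty) :
    ∀ T ∈ rwCompose n x fam₁ fam₂, T.Nonempty := by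
  intro T hT
  rw [mem_rwCompose hx hn hroot] at hT
  rcases hT with ⟨S, hS, _, rfl⟩ | ⟨S, hS, _, rfl⟩ | ⟨rfl, _⟩
  · exact relabL_nonempty hn (h₁ S hS)
  · exact relabR_nonempty hx (h₂ S hS)
  · exact ⟨x, Finset.mem_Icc.mpr ⟨le_rfl, by omega⟩⟩

lemma root_mem_rwCompose {m n x : ℕ} (hx : 1 ≤ x) (hxm : x ≤ m) (hn : 1 ≤ n) (hm : 2 ≤ m)
    {fam₁ fam₂ : Finset (Finset ℕ)} (hroot₁ : Finset.Icc 1 m ∈ fam₁)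
    (hroot : Finset.Icc 1 n ∈ fam₂) :
    Finset.Icc 1 (m + n - 1) ∈ rwCompose n x fam₁ fam₂ := by
  rw [mem_rwCompose hx hn hroot]
  refine Or.inl ⟨Finset.Icc 1 m, hroot₁, ?_, (relabL_Icc hn hx hxm).symm⟩
  intro h
  have h1 : (1 : ℕ) ∈ Finset.Icc 1 m := Finset.mem_Icc.mpr ⟨le_rfl, by omega⟩
  have h2 : (2 : ℕ) ∈ Finset.Icc 1 m := Finset.mem_Icc.mpr ⟨by omega, hm⟩
  rw [h, Finset.mem_singleton] at h1 h2
  omega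

/-! ### Unit laws -/

lemma relabL_one (x : ℕ) (S : Finset ℕ) : relabL x 1 S = S := by
  ext i
  rw [mem_relabL le_rfl]
  constructor
  · rintro (⟨j, hj, h1, h2⟩ | ⟨hj, h1, h2⟩ | ⟨j, hj, h1, h2⟩)
    · rwa [h2]
    · have : i = x := by omega
      rwa [this]
    · have : i = j := by omega
      rwa [this]
  · intro hi
    rcases lt_trichotomy i x with hc | hc | hc
    · exact Or.inl ⟨i, hi, hc, rfl⟩
    · exact Or.inr (Or.inl ⟨hc ▸ hi, by omega, by omega⟩)
    · exact Or.inr (Or.inr ⟨i, hi, hc, by omega⟩)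

lemma relabR_one (S : Finset ℕ) : relabR 1 S = S := by
  ext i
  rw [mem_relabR]
  constructor
  · rintro ⟨j, hj, h2⟩
    have : i = j := by omega
    rwa [this]
  · intro hi
    exact ⟨i, hi, by omega⟩

lemma not_isRed_unitT : ¬ IsRed unitT (Finset.Icc 1 1) := by
  rw [IsRed_iff]
  rintro ⟨h, -⟩
  have hIcc : Finset.Icc 1 1 = ({1} : Finset ℕ) := Finset.Icc_self 1
  have hch : childrenF unitT (Finset.Icc 1 1) = ∅ := by
    ext T
    simp only [mem_childrenF, Finset.notMem_empty, iff_false, not_and]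
    intro hT
    simp only [unitT, Finset.mem_singleton] at hT
    subst hT
    intro hss
    exact absurd (hIcc ▸ hss) (lt_irrefl _)
  rw [labelsOf, hch] at h
  simp [hIcc] at h

lemma rwCompose_unit_right {x : ℕ} (hx : 1 ≤ x) (F : Finset (Finset ℕ)) :
    rwCompose 1 x F unitT = F := by
  unfold rwCompose
  simp only []
  rw [if_neg not_isRed_unitT]
  have hB : Finset.Icc x (x + 1 - 1) = ({x} : Finset ℕ) := by
    have : x + 1 - 1 = x := by omega
    rw [this, Finset.Icc_self]
  have hf₂ : unitT.image (relabR x) = {({x} : Finset ℕ)} := by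
    unfold unitT
    rw [Finset.image_singleton, relabR_singleton]
    norm_num
  have hf₁ : F.image (relabL x 1) = F := by
    rw [show relabL x 1 = id from funext fun S => relabL_one x S, Finset.image_id]
  rw [hf₁, hf₂, hB]
  simp

lemma rwCompose_unit_left {n : ℕ} (G : Finset (Finset ℕ))
    (hroot : Finset.Icc 1 n ∈ G) :
    rwCompose n 1 unitT G = G := by
  unfold rwCompose
  simp only []
  have hB : Finset.Icc 1 (1 + n - 1) = Finset.Icc 1 n := by
    congr 1
    omega
  have hf₂ : G.image (relabR 1) = G := by
    rw [show relabR 1 = id from funext fun S => relabR_one S, Finset.image_id]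
  have hf₁ : unitT.image (relabL 1 n) = {Finset.Icc 1 n} := by
    unfold unitT
    rw [Finset.image_singleton, relabL_singleton_self, hB]
  split_ifs with h1 h2
  · rw [hf₂]
  · exact absurd rfl h2
  · exact absurd rfl h2
  · rw [hf₁, hf₂, hB]
    ext T
    simp only [Finset.mem_union, Finset.mem_sdiff, Finset.mem_singleton]
    constructor
    · rintro (rfl | ⟨hT, _⟩)
      · exact hroot
      · exact hT
    · intro hT
      by_cases hT' : T = Finset.Icc 1 n
      · exact Or.inl hT'
      · exact Or.inr ⟨hT, hT'⟩

lemma IsRWTree_one {F : Finset (Finset ℕ)} (h : IsRWTree 1 F) : F = {{1}} := by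
  have h1 : Finset.Icc 1 1 = ({1} : Finset ℕ) := Finset.Icc_self 1
  apply Finset.Subset.antisymm
  · intro S hS
    obtain ⟨hne, hsub⟩ := h.1 S hS
    rw [h1] at hsub
    rw [Finset.mem_singleton]
    exact Finset.Subset.antisymm hsub (Finset.singleton_subset_iff.mpr (by
      obtain ⟨i, hi⟩ := hne
      have := hsub hi
      rw [Finset.mem_singleton] at this
      rwa [← this]))
  · intro S hS
    rw [Finset.mem_singleton] at hS
    subst hS
    exact h1 ▸ h.2.1

lemma IsRWTree_one_le {n : ℕ} {F : Finset (Finset ℕ)} (h : IsRWTree n F) : 1 ≤ n := by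
  have := (h.1 _ h.2.1).1
  obtain ⟨i, hi⟩ := this
  have := Finset.mem_Icc.mp hi
  omega

end RW
namespace RW

lemma mem_labelsOf_iff {fam : Finset (Finset ℕ)} {V : Finset ℕ} {i : ℕ} :
    i ∈ labelsOf fam V ↔ i ∈ V ∧ ∀ T ∈ fam, T ⊂ V → i ∉ T := by
  unfold labelsOf
  rw [Finset.mem_sdiff]
  constructor
  · rintro ⟨hV, h⟩
    refine ⟨hV, fun T hT hTV hiT => ?_⟩
    obtain ⟨c, hc, hTc⟩ := exists_child hT hTV
    exact h (Finset.mem_biUnion.mpr ⟨c, hc, hTc hiT⟩)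
  · rintro ⟨hV, h⟩
    refine ⟨hV, fun hmem => ?_⟩
    obtain ⟨c, hc, hic⟩ := Finset.mem_biUnion.mp hmem
    exact h c (mem_childrenF.mp hc).1 (childrenF_ssubset hc) hic

lemma not_isRed_singleton (fam : Finset (Finset ℕ)) (a : ℕ) : ¬ IsRed fam {a} := by
  rw [IsRed_iff]
  rintro ⟨h, -⟩
  have : a ∈ labelsOf fam {a} := by
    rw [mem_labelsOf_iff]
    refine ⟨Finset.mem_singleton_self a, fun T _ hT haT => ?_⟩
    rw [Finset.ssubset_singleton_iff] at hT
    subst hT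
    exact absurd haT (Finset.notMem_empty a)
  rw [h] at this
  exact absurd this (Finset.notMem_empty a)

lemma relabL_subset_block {x n : ℕ} (hn : 1 ≤ n) {S : Finset ℕ}
    (h : relabL x n S ⊆ Finset.Icc x (x + n - 1)) : S ⊆ {x} := by
  rw [← relabL_singleton_self x n] at h
  exact (relabL_subset_iff hn).mp h

section Transfer

variable {m n x : ℕ} {fam₁ fam₂ : Finset (Finset ℕ)}

/-- Transfer of redness for nodes coming from the second tree. -/
lemma red_transfer_R (h₁ : IsRWTree m fam₁) (h₂ : IsRWTree n fam₂) (hx : 1 ≤ x)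
    {S : Finset ℕ} (hS : S ∈ fam₂) (hSne : S ≠ Finset.Icc 1 n) :
    IsRed (rwCompose n x fam₁ fam₂) (relabR x S) ↔ IsRed fam₂ S := by
  have hn := IsRWTree_one_le h₂
  have hroot := h₂.2.1
  have hSss : relabR x S ⊂ Finset.Icc x (x + n - 1) := by
    rw [← relabR_eq_Icc hx]
    exact (relabR_ssubset_iff hx).mpr (Finset.ssubset_iff_subset_ne.mpr ⟨(h₂.1 S hS).2, hSne⟩)
  have hcong : ∀ T, T ⊆ relabR x S →
      (T ∈ rwCompose n x fam₁ fam₂ ↔ T ∈ fam₂.image (relabR x)) := by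
    intro T hT
    constructor
    · intro hmem
      rw [mem_rwCompose hx hn hroot] at hmem
      rcases hmem with ⟨S', hS', hne', rfl⟩ | ⟨S', hS', _, rfl⟩ | ⟨rfl, _⟩
      · exfalso
        by_cases hxS' : x ∈ S'
        · exact absurd (lt_of_le_of_lt ((block_subset_relabL hxS').trans hT) hSss)
            (ssubset_irrefl _)
        · obtain ⟨i, hi⟩ := relabL_nonempty hn (h₁.1 S' hS').1
          exact Finset.disjoint_left.mp (relabL_disjoint_block hn hxS') hi
            (hSss.subset (hT hi))
      · exact Finset.mem_image_of_mem _ hS'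
      · exact absurd (lt_of_le_of_lt hT hSss) (ssubset_irrefl _)
    · intro hmem
      obtain ⟨S', hS', rfl⟩ := Finset.mem_image.mp hmem
      rw [mem_rwCompose hx hn hroot]
      refine Or.inr (Or.inl ⟨S', hS', ?_, rfl⟩)
      rintro rfl
      rw [relabR_eq_Icc hx] at hT
      exact absurd (lt_of_le_of_lt hT hSss) (ssubset_irrefl _)
  rw [isRed_congr hcong]
  have himg : fam₂.image (relabR x) = fam₂.image (bimg (sng x)) :=
    Finset.image_congr fun y _ => relabR_eq x y
  rw [himg, relabR_eq, isRed_image (BW_sng hx)]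

/-- Transfer of redness for the block node `B`. -/
lemma red_transfer_B (h₁ : IsRWTree m fam₁) (h₂ : IsRWTree n fam₂) (hx : 1 ≤ x)
    (hkeep : keepB n x fam₁ fam₂) :
    IsRed (rwCompose n x fam₁ fam₂) (Finset.Icc x (x + n - 1)) ↔
      IsRed fam₂ (Finset.Icc 1 n) := by
  have hn := IsRWTree_one_le h₂
  have hroot := h₂.2.1
  have hcong : ∀ T, T ⊆ Finset.Icc x (x + n - 1) →
      (T ∈ rwCompose n x fam₁ fam₂ ↔ T ∈ fam₂.image (relabR x)) := by
    intro T hT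
    constructor
    · intro hmem
      rw [mem_rwCompose hx hn hroot] at hmem
      rcases hmem with ⟨S', hS', hne', rfl⟩ | ⟨S', hS', _, rfl⟩ | ⟨rfl, _⟩
      · exfalso
        have hsub : S' ⊆ {x} := relabL_subset_block hn hT
        obtain ⟨i, hi⟩ := (h₁.1 S' hS').1
        have : S' = {x} := Finset.Subset.antisymm hsub
          (Finset.singleton_subset_iff.mpr (by
            have := hsub hi
            rw [Finset.mem_singleton] at this
            rwa [← this]))
        exact hne' this
      · exact Finset.mem_image_of_mem _ hS'
      · rw [← relabR_eq_Icc hx]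
        exact Finset.mem_image_of_mem _ hroot
    · intro hmem
      obtain ⟨S', hS', rfl⟩ := Finset.mem_image.mp hmem
      rw [mem_rwCompose hx hn hroot]
      by_cases hS'root : S' = Finset.Icc 1 n
      · subst hS'root
        exact Or.inr (Or.inr ⟨relabR_eq_Icc hx, hkeep⟩)
      · exact Or.inr (Or.inl ⟨S', hS', hS'root, rfl⟩)
  rw [isRed_congr hcong, ← relabR_eq_Icc hx]
  have himg : fam₂.image (relabR x) = fam₂.image (bimg (sng x)) :=
    Finset.image_congr fun y _ => relabR_eq x y
  rw [himg, relabR_eq, isRed_image (BW_sng hx)]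

/-- Transfer of redness for nodes of the first tree not containing `x`. -/
lemma red_transfer_L_free (h₁ : IsRWTree m fam₁) (h₂ : IsRWTree n fam₂) (hx : 1 ≤ x)
    {S : Finset ℕ} (hS : S ∈ fam₁) (hxS : x ∉ S) :
    IsRed (rwCompose n x fam₁ fam₂) (relabL x n S) ↔ IsRed fam₁ S := by
  have hn := IsRWTree_one_le h₂
  have hroot := h₂.2.1
  have hd : Disjoint (relabL x n S) (Finset.Icc x (x + n - 1)) :=
    relabL_disjoint_block hn hxS
  have hcong : ∀ T, T ⊆ relabL x n S →
      (T ∈ rwCompose n x fam₁ fam₂ ↔ T ∈ fam₁.image (relabL x n)) := by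
    intro T hT
    constructor
    · intro hmem
      rw [mem_rwCompose hx hn hroot] at hmem
      rcases hmem with ⟨S', hS', _, rfl⟩ | ⟨S', hS', _, rfl⟩ | ⟨rfl, _⟩
      · exact Finset.mem_image_of_mem _ hS'
      · exfalso
        obtain ⟨i, hi⟩ := relabR_nonempty hx (h₂.1 S' hS').1
        exact Finset.disjoint_left.mp hd (hT hi)
          (relabR_subset_block hx (h₂.1 S' hS').2 hi)
      · exfalso
        have hxB : x ∈ Finset.Icc x (x + n - 1) := Finset.mem_Icc.mpr ⟨le_rfl, by omega⟩
        exact Finset.disjoint_left.mp hd (hT hxB) hxB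
    · intro hmem
      obtain ⟨S', hS', rfl⟩ := Finset.mem_image.mp hmem
      rw [mem_rwCompose hx hn hroot]
      have hsub : S' ⊆ S := (relabL_subset_iff hn).mp hT
      refine Or.inl ⟨S', hS', ?_, rfl⟩
      rintro rfl
      exact hxS (hsub (Finset.mem_singleton_self x))
  rw [isRed_congr hcong]
  have himg : fam₁.image (relabL x n) = fam₁.image (bimg (blk x n)) :=
    Finset.image_congr fun y _ => relabL_eq x n y
  rw [himg, relabL_eq, isRed_image (BW_blk x hn)]

end Transfer

end RW
namespace RW

lemma eq_singleton_of_subset {S : Finset ℕ} {a : ℕ} (hne : S.Nonempty) (h : S ⊆ {a}) :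
    S = {a} := by
  obtain ⟨i, hi⟩ := hne
  have hia := h hi
  rw [Finset.mem_singleton] at hia
  subst hia
  exact Finset.Subset.antisymm h (Finset.singleton_subset_iff.mpr hi)

section Transfer

variable {m n x : ℕ} {fam₁ fam₂ : Finset (Finset ℕ)}

/-- Transfer of redness for nodes of the first tree (key structural lemma). -/
lemma red_transfer_L (h₁ : IsRWTree m fam₁) (h₂ : IsRWTree n fam₂) (hx : 1 ≤ x) :
    ∀ k, ∀ S : Finset ℕ, S.card ≤ k → S ∈ fam₁ → S ≠ {x} →
      (IsRed (rwCompose n x fam₁ fam₂) (relabL x n S) ↔ IsRed fam₁ S) := by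
  have hn := IsRWTree_one_le h₂
  have hroot := h₂.2.1
  have memL : ∀ {S' : Finset ℕ}, S' ∈ fam₁ → S' ≠ {x} →
      relabL x n S' ∈ rwCompose n x fam₁ fam₂ := fun hS' hne =>
    (mem_rwCompose hx hn hroot).mpr (Or.inl ⟨_, hS', hne, rfl⟩)
  have memR : ∀ {S' : Finset ℕ}, S' ∈ fam₂ → S' ≠ Finset.Icc 1 n →
      relabR x S' ∈ rwCompose n x fam₁ fam₂ := fun hS' hne =>
    (mem_rwCompose hx hn hroot).mpr (Or.inr (Or.inl ⟨_, hS', hne, rfl⟩))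
  have memB : keepB n x fam₁ fam₂ →
      Finset.Icc x (x + n - 1) ∈ rwCompose n x fam₁ fam₂ := fun hk =>
    (mem_rwCompose hx hn hroot).mpr (Or.inr (Or.inr ⟨rfl, hk⟩))
  -- a set whose image lies in the block is `{x}`
  have hblock : ∀ {S' : Finset ℕ}, S' ∈ fam₁ →
      relabL x n S' ⊆ Finset.Icc x (x + n - 1) → S' = {x} := by
    intro S' hS' hsub
    exact eq_singleton_of_subset (h₁.1 S' hS').1 (relabL_subset_block hn hsub)
  intro k
  induction k with
  | zero =>
    intro S hcard hS _
    have := (h₁.1 S hS).1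
    rw [← Finset.card_pos] at this
    omega
  | succ k ih =>
    intro S hcard hS hne
    by_cases hxS : x ∈ S
    swap
    · exact red_transfer_L_free h₁ h₂ hx hS hxS
    have hBsub : Finset.Icc x (x + n - 1) ⊆ relabL x n S := block_subset_relabL hxS
    have hBss : Finset.Icc x (x + n - 1) ⊂ relabL x n S :=
      Finset.ssubset_iff_subset_ne.mpr ⟨hBsub, fun h => hne ((relabL_eq_block_iff hn).mp h.symm)⟩
    by_cases hchx : ∃ c ∈ childrenF fam₁ S, x ∈ c
    · -- a child `c` of `S` contains `x`
      obtain ⟨c, hc, hxc⟩ := hchx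
      have hcS : c ⊂ S := childrenF_ssubset hc
      have hcmem : c ∈ fam₁ := (mem_childrenF.mp hc).1
      have hcmax := (mem_childrenF.mp hc).2.2
      -- the labels of `L S` are empty iff those of `S` are
      have hlab : labelsOf (rwCompose n x fam₁ fam₂) (relabL x n S) = ∅ ↔
          labelsOf fam₁ S = ∅ := by
        constructor
        · intro hF0
          rw [Finset.eq_empty_iff_forall_notMem] at hF0 ⊢
          intro j hj
          rw [mem_labelsOf_iff] at hj
          have hjx : j ≠ x := fun h => hj.2 c hcmem hcS (h ▸ hxc)
          rcases lt_or_gt_of_ne hjx with hlt | hgt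
          · refine hF0 j ?_
            rw [mem_labelsOf_iff]
            refine ⟨(mem_relabL hn).mpr (Or.inl ⟨j, hj.1, hlt, rfl⟩), ?_⟩
            intro T hT hTss hiT
            rw [mem_rwCompose hx hn hroot] at hT
            rcases hT with ⟨S', hS', _, rfl⟩ | ⟨S', hS', _, rfl⟩ | ⟨rfl, _⟩
            · rw [mem_relabL hn] at hiT
              have hjS' : j ∈ S' := by
                rcases hiT with ⟨j', hj', h1, h2⟩ | ⟨_, h1, h2⟩ | ⟨j', hj', h1, h2⟩ <;>
                  [skip; omega; omega]
                rwa [h2]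
              exact hj.2 S' hS' ((relabL_ssubset_iff hn).mp hTss) hjS'
            · obtain ⟨j', hj', heq⟩ := mem_relabR.mp hiT
              have := Finset.mem_Icc.mp ((h₂.1 S' hS').2 hj')
              omega
            · rw [Finset.mem_Icc] at hiT; omega
          · refine hF0 (j + n - 1) ?_
            rw [mem_labelsOf_iff]
            refine ⟨(mem_relabL hn).mpr (Or.inr (Or.inr ⟨j, hj.1, hgt, rfl⟩)), ?_⟩
            intro T hT hTss hiT
            rw [mem_rwCompose hx hn hroot] at hT
            rcases hT with ⟨S', hS', _, rfl⟩ | ⟨S', hS', _, rfl⟩ | ⟨rfl, _⟩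
            · rw [mem_relabL hn] at hiT
              have hjS' : j ∈ S' := by
                rcases hiT with ⟨j', hj', h1, h2⟩ | ⟨_, h1, h2⟩ | ⟨j', hj', h1, h2⟩ <;>
                  [omega; omega; skip]
                have : j' = j := by omega
                rwa [← this]
              exact hj.2 S' hS' ((relabL_ssubset_iff hn).mp hTss) hjS'
            · obtain ⟨j', hj', heq⟩ := mem_relabR.mp hiT
              have := Finset.mem_Icc.mp ((h₂.1 S' hS').2 hj')
              omega
            · rw [Finset.mem_Icc] at hiT; omega
        · intro h10
          rw [Finset.eq_empty_iff_forall_notMem] at h10 ⊢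
          intro i hi
          rw [mem_labelsOf_iff] at hi
          obtain ⟨hiLS, hmax⟩ := hi
          by_cases hiB : i ∈ Finset.Icc x (x + n - 1)
          · -- the block region is covered by a member below `L S`
            by_cases hcx : c = {x}
            · by_cases hred : IsRed fam₂ (Finset.Icc 1 n)
              · have hlab2 : labelsOf fam₂ (Finset.Icc 1 n) = ∅ := ((IsRed_iff _ _).mp hred).1
                have hj' : i - x + 1 ∈ Finset.Icc 1 n := by
                  rw [Finset.mem_Icc] at hiB ⊢; omega
                have hex : ∃ T ∈ fam₂, T ⊂ Finset.Icc 1 n ∧ i - x + 1 ∈ T := by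
                  by_contra hno
                  push_neg at hno
                  have : i - x + 1 ∈ labelsOf fam₂ (Finset.Icc 1 n) :=
                    mem_labelsOf_iff.mpr ⟨hj', fun T hT hTss hjT => hno T hT hTss hjT⟩
                  rw [hlab2] at this
                  exact absurd this (Finset.notMem_empty _)
                obtain ⟨T₂, hT₂, hT₂ss, hjT₂⟩ := hex
                refine hmax (relabR x T₂) (memR hT₂ hT₂ss.ne) ?_ ?_
                · exact lt_of_le_of_lt (relabR_subset_block hx (h₂.1 T₂ hT₂).2) hBss
                · rw [mem_relabR]
                  refine ⟨i - x + 1, hjT₂, ?_⟩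
                  rw [Finset.mem_Icc] at hiB
                  omega
              · have hkeep : keepB n x fam₁ fam₂ := by
                  unfold keepB
                  rw [if_neg hred]
                  exact hcx ▸ hcmem
                exact hmax _ (memB hkeep) hBss hiB
            · exact hmax (relabL x n c) (memL hcmem hcx)
                ((relabL_ssubset_iff hn).mpr hcS) (block_subset_relabL hxc hiB)
          · -- outside the block: `i` comes from a label `j ≠ x` of `S`
            rw [mem_relabL hn] at hiLS
            rw [Finset.mem_Icc] at hiB
            rcases hiLS with ⟨j, hjS, hlt, heq⟩ | ⟨_, h1, h2⟩ | ⟨j, hjS, hgt, heq⟩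
            · refine h10 j (mem_labelsOf_iff.mpr ⟨hjS, fun T hT hTss hjT => ?_⟩)
              by_cases hTx : T = {x}
              · rw [hTx, Finset.mem_singleton] at hjT; omega
              · exact hmax (relabL x n T) (memL hT hTx) ((relabL_ssubset_iff hn).mpr hTss)
                  ((mem_relabL hn).mpr (Or.inl ⟨j, hjT, hlt, heq⟩))
            · omega
            · refine h10 j (mem_labelsOf_iff.mpr ⟨hjS, fun T hT hTss hjT => ?_⟩)
              by_cases hTx : T = {x}
              · rw [hTx, Finset.mem_singleton] at hjT; omega
              · exact hmax (relabL x n T) (memL hT hTx) ((relabL_ssubset_iff hn).mpr hTss)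
                  ((mem_relabL hn).mpr (Or.inr (Or.inr ⟨j, hjT, hgt, heq⟩)))
      constructor
      · -- from the composite to the tree
        intro hFred
        rw [IsRed_iff] at hFred
        rw [IsRed_iff]
        refine ⟨hlab.mp hFred.1, ?_⟩
        intro c' hc' hred'
        have hc'mem : c' ∈ fam₁ := (mem_childrenF.mp hc').1
        have hc'ss : c' ⊂ S := childrenF_ssubset hc'
        have hc'ne : c' ≠ {x} := fun h => not_isRed_singleton fam₁ x (h ▸ hred')
        have hchild : relabL x n c' ∈ childrenF (rwCompose n x fam₁ fam₂) (relabL x n S) := by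
          rw [mem_childrenF]
          refine ⟨memL hc'mem hc'ne, (relabL_ssubset_iff hn).mpr hc'ss, ?_⟩
          intro U hU hssU hUss
          rw [mem_rwCompose hx hn hroot] at hU
          rcases hU with ⟨S', hS', hne', rfl⟩ | ⟨S', hS', _, rfl⟩ | ⟨rfl, _⟩
          · exact (mem_childrenF.mp hc').2.2 S' hS' ((relabL_ssubset_iff hn).mp hssU)
              ((relabL_ssubset_iff hn).mp hUss)
          · exact hc'ne (hblock hc'mem
              (hssU.subset.trans (relabR_subset_block hx (h₂.1 S' hS').2)))
          · exact hc'ne (hblock hc'mem hssU.subset)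
        have hcard' : c'.card ≤ k := by
          have := Finset.card_lt_card hc'ss
          omega
        exact hFred.2 _ hchild ((ih c' hcard' hc'mem hc'ne).mpr hred')
      · -- from the tree to the composite
        intro h1red
        rw [IsRed_iff] at h1red
        rw [IsRed_iff]
        refine ⟨hlab.mpr h1red.1, ?_⟩
        intro T hT hTred
        rw [mem_childrenF] at hT
        obtain ⟨hTmem, hTss, hTmax⟩ := hT
        rw [mem_rwCompose hx hn hroot] at hTmem
        rcases hTmem with ⟨S', hS', hne', rfl⟩ | ⟨S', hS', hne', rfl⟩ | ⟨rfl, hkeep⟩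
        · -- an `L`-node: it must be a child of `S`
          have hS'S : S' ⊂ S := (relabL_ssubset_iff hn).mp hTss
          have hS'child : S' ∈ childrenF fam₁ S := by
            rw [mem_childrenF]
            refine ⟨hS', hS'S, ?_⟩
            intro U hU hssU hUss
            by_cases hUx : U = {x}
            · subst hUx
              obtain ⟨i, hi⟩ := (h₁.1 S' hS').1
              have := hssU.subset hi
              rw [Finset.mem_singleton] at this
              subst this
              exact hne' (eq_singleton_of_subset (h₁.1 S' hS').1 hssU.subset)
            · exact hTmax (relabL x n U) (memL hU hUx) ((relabL_ssubset_iff hn).mpr hssU)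
                ((relabL_ssubset_iff hn).mpr hUss)
          have hcard' : S'.card ≤ k := by
            have := Finset.card_lt_card hS'S
            omega
          exact h1red.2 S' hS'child ((ih S' hcard' hS' hne').mp hTred)
        · -- an `R`-node can only be a child in the (R3) situation, where the root
          -- of the second tree is red, so all its children are white
          by_cases hred : IsRed fam₂ (Finset.Icc 1 n)
          · have hS'ss : S' ⊂ Finset.Icc 1 n :=
              Finset.ssubset_iff_subset_ne.mpr ⟨(h₂.1 S' hS').2, hne'⟩
            have hS'child : S' ∈ childrenF fam₂ (Finset.Icc 1 n) := by
              rw [mem_childrenF]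
              refine ⟨hS', hS'ss, ?_⟩
              intro U hU hssU hUss
              exact hTmax (relabR x U) (memR hU hUss.ne) ((relabR_ssubset_iff hx).mpr hssU)
                (lt_of_le_of_lt (relabR_subset_block hx (h₂.1 U hU).2) hBss)
            exact ((IsRed_iff _ _).mp hred).2 S' hS'child
              ((red_transfer_R h₁ h₂ hx hS' hne').mp hTred)
          · exfalso
            by_cases hcx : c = {x}
            · have hkeep : keepB n x fam₁ fam₂ := by
                unfold keepB
                rw [if_neg hred]
                exact hcx ▸ hcmem
              refine hTmax _ (memB hkeep) ?_ hBss
              rw [← relabR_eq_Icc hx]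
              exact (relabR_ssubset_iff hx).mpr
                (Finset.ssubset_iff_subset_ne.mpr ⟨(h₂.1 S' hS').2, hne'⟩)
            · refine hTmax (relabL x n c) (memL hcmem hcx) ?_ ((relabL_ssubset_iff hn).mpr hcS)
              refine Finset.ssubset_iff_subset_ne.mpr
                ⟨(relabR_subset_block hx (h₂.1 S' hS').2).trans (block_subset_relabL hxc), ?_⟩
              intro hEq
              exact hcx (hblock hcmem (hEq ▸ (relabR_subset_block hx (h₂.1 S' hS').2)))
        · -- the block node `B` can only be a child when the root of the second
          -- tree is white
          have hred : ¬ IsRed fam₂ (Finset.Icc 1 n) := by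
            intro hred
            by_cases hcx : c = {x}
            · unfold keepB at hkeep
              rw [if_pos hred] at hkeep
              rcases hkeep with h | h
              · exact h (hcx ▸ hcmem)
              · rw [h, Finset.mem_singleton] at hS
                exact hne hS
            · refine hTmax (relabL x n c) (memL hcmem hcx) ?_ ((relabL_ssubset_iff hn).mpr hcS)
              refine Finset.ssubset_iff_subset_ne.mpr ⟨block_subset_relabL hxc, ?_⟩
              intro hEq
              exact hcx (hblock hcmem hEq.ge)
          exact hred ((red_transfer_B h₁ h₂ hx hkeep).mp hTred)
    · -- no child of `S` contains `x`: `x` is a label of `S` and both sides are white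
      push_neg at hchx
      have hxlab : x ∈ labelsOf fam₁ S := by
        rw [mem_labelsOf_iff]
        refine ⟨hxS, fun T hT hTss hxT => ?_⟩
        obtain ⟨c, hc, hTc⟩ := exists_child hT hTss
        exact hchx c hc (hTc hxT)
      have h1white : ¬ IsRed fam₁ S := by
        rw [IsRed_iff]
        rintro ⟨h0, -⟩
        rw [h0] at hxlab
        exact absurd hxlab (Finset.notMem_empty x)
      have hxnotfam : {x} ∉ fam₁ := by
        intro h
        have hss : ({x} : Finset ℕ) ⊂ S :=
          Finset.ssubset_iff_subset_ne.mpr ⟨Finset.singleton_subset_iff.mpr hxS, fun h' => hne h'.symm⟩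
        obtain ⟨c, hc, hTc⟩ := exists_child h hss
        exact hchx c hc (hTc (Finset.mem_singleton_self x))
      have h2white : ¬ IsRed (rwCompose n x fam₁ fam₂) (relabL x n S) := by
        by_cases hred : IsRed fam₂ (Finset.Icc 1 n)
        · have hkeep : keepB n x fam₁ fam₂ := by
            unfold keepB
            rw [if_pos hred]
            exact Or.inl hxnotfam
          intro hFred
          have hchildB : Finset.Icc x (x + n - 1) ∈
              childrenF (rwCompose n x fam₁ fam₂) (relabL x n S) := by
            rw [mem_childrenF]
            refine ⟨memB hkeep, hBss, ?_⟩
            intro U hU hssU hUss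
            rw [mem_rwCompose hx hn hroot] at hU
            rcases hU with ⟨S', hS', _, rfl⟩ | ⟨S', hS', _, rfl⟩ | ⟨rfl, _⟩
            · by_cases hxS' : x ∈ S'
              · have hS'S : S' ⊂ S := (relabL_ssubset_iff hn).mp hUss
                obtain ⟨c, hc, hsc⟩ := exists_child hS' hS'S
                exact hchx c hc (hsc hxS')
              · have hxB : x ∈ Finset.Icc x (x + n - 1) := Finset.mem_Icc.mpr ⟨le_rfl, by omega⟩
                exact Finset.disjoint_left.mp (relabL_disjoint_block hn hxS')
                  (hssU.subset hxB) hxB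
            · exact absurd (lt_of_lt_of_le hssU (relabR_subset_block hx (h₂.1 S' hS').2))
                (ssubset_irrefl _)
            · exact ssubset_irrefl _ hssU
          rw [IsRed_iff] at hFred
          exact hFred.2 _ hchildB ((red_transfer_B h₁ h₂ hx hkeep).mpr hred)
        · have hkeepF : ¬ keepB n x fam₁ fam₂ := by
            unfold keepB
            rw [if_neg hred]
            exact hxnotfam
          rw [IsRed_iff]
          rintro ⟨hlab0, hch⟩
          rw [IsRed_iff] at hred
          push_neg at hred
          by_cases hlab2 : labelsOf fam₂ (Finset.Icc 1 n) = ∅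
          · obtain ⟨c₂, hc₂, hc₂red⟩ := hred hlab2
            have hc₂mem : c₂ ∈ fam₂ := (mem_childrenF.mp hc₂).1
            have hc₂ss : c₂ ⊂ Finset.Icc 1 n := childrenF_ssubset hc₂
            have hchild : relabR x c₂ ∈
                childrenF (rwCompose n x fam₁ fam₂) (relabL x n S) := by
              rw [mem_childrenF]
              refine ⟨memR hc₂mem hc₂ss.ne,
                lt_of_le_of_lt (relabR_subset_block hx (h₂.1 c₂ hc₂mem).2) hBss, ?_⟩
              intro U hU hssU hUss
              rw [mem_rwCompose hx hn hroot] at hU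
              rcases hU with ⟨S', hS', _, rfl⟩ | ⟨S', hS', hne', rfl⟩ | ⟨rfl, hk⟩
              · by_cases hxS' : x ∈ S'
                · have hS'S : S' ⊂ S := (relabL_ssubset_iff hn).mp hUss
                  obtain ⟨c, hc, hsc⟩ := exists_child hS' hS'S
                  exact hchx c hc (hsc hxS')
                · obtain ⟨i, hi⟩ := relabR_nonempty hx (h₂.1 c₂ hc₂mem).1
                  exact Finset.disjoint_left.mp (relabL_disjoint_block hn hxS')
                    (hssU.subset hi) (relabR_subset_block hx (h₂.1 c₂ hc₂mem).2 hi)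
              · exact (mem_childrenF.mp hc₂).2.2 S' hS' ((relabR_ssubset_iff hx).mp hssU)
                  (Finset.ssubset_iff_subset_ne.mpr ⟨(h₂.1 S' hS').2, hne'⟩)
              · exact hkeepF hk
            exact hch _ hchild ((red_transfer_R h₁ h₂ hx hc₂mem hc₂ss.ne).mpr hc₂red)
          · obtain ⟨j, hj⟩ := Finset.nonempty_iff_ne_empty.mpr hlab2
            rw [mem_labelsOf_iff] at hj
            have hj1n := Finset.mem_Icc.mp hj.1
            have : x + j - 1 ∈ labelsOf (rwCompose n x fam₁ fam₂) (relabL x n S) := by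
              rw [mem_labelsOf_iff]
              refine ⟨hBsub (Finset.mem_Icc.mpr ⟨by omega, by omega⟩), ?_⟩
              intro T hT hTss hiT
              rw [mem_rwCompose hx hn hroot] at hT
              rcases hT with ⟨S', hS', _, rfl⟩ | ⟨S', hS', hne', rfl⟩ | ⟨rfl, hk⟩
              · by_cases hxS' : x ∈ S'
                · have hS'S : S' ⊂ S := (relabL_ssubset_iff hn).mp hTss
                  obtain ⟨c, hc, hsc⟩ := exists_child hS' hS'S
                  exact hchx c hc (hsc hxS')
                · refine Finset.disjoint_left.mp (relabL_disjoint_block hn hxS') hiT ?_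
                  rw [Finset.mem_Icc]
                  omega
              · obtain ⟨j'', hj'', heq⟩ := mem_relabR.mp hiT
                have := Finset.mem_Icc.mp ((h₂.1 S' hS').2 hj'')
                have hjj : j'' = j := by omega
                exact hj.2 S' hS'
                  (Finset.ssubset_iff_subset_ne.mpr ⟨(h₂.1 S' hS').2, hne'⟩) (hjj ▸ hj'')
              · exact hkeepF hk
            rw [hlab0] at this
            exact absurd this (Finset.notMem_empty _)
      exact iff_of_false h2white h1white

end Transfer

end RW
namespace RW

lemma tree_ne_sing {m : ℕ} {A : Finset (Finset ℕ)} (hA : IsRWTree m A) (hm : 2 ≤ m)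
    (a : ℕ) : A ≠ {{a}} := by
  intro h
  have hmem := hA.2.1
  rw [h, Finset.mem_singleton] at hmem
  have hcard := congrArg Finset.card hmem
  rw [Nat.card_Icc, Finset.card_singleton] at hcard
  omega

lemma rwCompose_ne_sing {m n x : ℕ} {A B : Finset (Finset ℕ)} (hA : IsRWTree m A)
    (hB : IsRWTree n B) (hm : 2 ≤ m) (hx : 1 ≤ x) (hxm : x ≤ m) (a : ℕ) :
    rwCompose n x A B ≠ {{a}} := by
  intro h
  have hroot := root_mem_rwCompose hx hxm (IsRWTree_one_le hB) hm hA.2.1 hB.2.1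
  rw [h, Finset.mem_singleton] at hroot
  have hcard := congrArg Finset.card hroot
  rw [Nat.card_Icc, Finset.card_singleton] at hcard
  have := IsRWTree_one_le hB
  omega

lemma parallel_core {m n p x y : ℕ} {A B C : Finset (Finset ℕ)}
    (hA : IsRWTree m A) (hB : IsRWTree n B) (hC : IsRWTree p C)
    (hx1 : 1 ≤ x) (hym : y ≤ m) (hxy : x < y) :
    rwCompose p (y + n - 1) (rwCompose n x A B) C
      = rwCompose n x (rwCompose p y A C) B := by
  have hn := IsRWTree_one_le hB
  have hp := IsRWTree_one_le hC
  have hm : 2 ≤ m := by omega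
  have hy1 : 1 ≤ y := by omega
  have hxm : x ≤ m := by omega
  have hy' : 1 ≤ y + n - 1 := by omega
  have hrootB := hB.2.1
  have hrootC := hC.2.1
  -- elements of subsets of blocks
  have hBel : ∀ {S : Finset ℕ}, S ∈ B → ∀ i ∈ relabR x S, i ≤ x + n - 1 := by
    intro S hS i hi
    exact (Finset.mem_Icc.mp (relabR_subset_block hx1 (hB.1 S hS).2 hi)).2
  have hCel : ∀ {S : Finset ℕ}, S ∈ C → ∀ j ∈ S, 1 ≤ j := by
    intro S hS j hj
    exact (Finset.mem_Icc.mp ((hC.1 S hS).2 hj)).1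
  -- membership facts
  have hK1 : ({y + n - 1} : Finset ℕ) ∈ rwCompose n x A B ↔ ({y} : Finset ℕ) ∈ A := by
    rw [mem_rwCompose hx1 hn hrootB]
    constructor
    · rintro (⟨S₁, hS₁, hne₁, hT⟩ | ⟨S₂, hS₂, hne₂, hT⟩ | ⟨hT, _⟩)
      · have : S₁ = {y} := relabL_inj hn (by rw [← hT, relabL_singleton_gt hxy])
        rwa [this] at hS₁
      · exfalso
        have : y + n - 1 ∈ relabR x S₂ := by rw [← hT]; exact Finset.mem_singleton_self _
        have := hBel hS₂ _ this
        omega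
      · exfalso
        have : y + n - 1 ∈ Finset.Icc x (x + n - 1) := by
          rw [← hT]; exact Finset.mem_singleton_self _
        rw [Finset.mem_Icc] at this
        omega
    · intro h
      refine Or.inl ⟨{y}, h, ?_, (relabL_singleton_gt hxy).symm⟩
      intro hEq
      rw [Finset.singleton_inj] at hEq
      omega
  have hK1' : ({x} : Finset ℕ) ∈ rwCompose p y A C ↔ ({x} : Finset ℕ) ∈ A := by
    rw [mem_rwCompose hy1 hp hrootC]
    constructor
    · rintro (⟨S₁, hS₁, hne₁, hT⟩ | ⟨S₂, hS₂, hne₂, hT⟩ | ⟨hT, _⟩)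
      · have : S₁ = {x} := relabL_inj hp (by rw [← hT, relabL_singleton_lt hxy])
        rwa [this] at hS₁
      · exfalso
        have hmem : x ∈ relabR y S₂ := by rw [← hT]; exact Finset.mem_singleton_self _
        have := Finset.mem_Icc.mp (relabR_subset_block hy1 (hC.1 S₂ hS₂).2 hmem)
        omega
      · exfalso
        have : x ∈ Finset.Icc y (y + p - 1) := by
          rw [← hT]; exact Finset.mem_singleton_self _
        rw [Finset.mem_Icc] at this
        omega
    · intro h
      refine Or.inl ⟨{x}, h, ?_, (relabL_singleton_lt hxy).symm⟩
      intro hEq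
      rw [Finset.singleton_inj] at hEq
      omega
  have hkeepL : keepB p (y + n - 1) (rwCompose n x A B) C ↔ keepB p y A C := by
    unfold keepB
    by_cases hred : IsRed C (Finset.Icc 1 p)
    · rw [if_pos hred, if_pos hred]
      constructor
      · rintro (h | h)
        · exact Or.inl fun hmem => h (hK1.mpr hmem)
        · exact absurd h (rwCompose_ne_sing hA hB hm hx1 hxm _)
      · rintro (h | h)
        · exact Or.inl fun hmem => h (hK1.mp hmem)
        · exact absurd h (tree_ne_sing hA hm _)
    · rw [if_neg hred, if_neg hred]
      exact hK1
  have hkeepR : keepB n x (rwCompose p y A C) B ↔ keepB n x A B := by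
    unfold keepB
    by_cases hred : IsRed B (Finset.Icc 1 n)
    · rw [if_pos hred, if_pos hred]
      constructor
      · rintro (h | h)
        · exact Or.inl fun hmem => h (hK1'.mpr hmem)
        · exact absurd h (rwCompose_ne_sing hA hC hm hy1 hym _)
      · rintro (h | h)
        · exact Or.inl fun hmem => h (hK1'.mp hmem)
        · exact absurd h (tree_ne_sing hA hm _)
    · rw [if_neg hred, if_neg hred]
      exact hK1'
  -- relabelling identities
  have hLRx : ∀ {S : Finset ℕ}, S ∈ B →
      relabL (y + n - 1) p (relabR x S) = relabR x S := by
    intro S hS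
    exact relabL_id fun i hi => by have := hBel hS i hi; omega
  have hLBx : relabL (y + n - 1) p (Finset.Icc x (x + n - 1)) = Finset.Icc x (x + n - 1) :=
    relabL_id fun i hi => by have := Finset.mem_Icc.mp hi; omega
  have hLRy : ∀ {S : Finset ℕ}, S ∈ C →
      relabL x n (relabR y S) = relabR (y + n - 1) S := by
    intro S hS
    exact relabL_relabR_gt hn hxy (hCel hS)
  have hLBy : relabL x n (Finset.Icc y (y + p - 1)) =
      Finset.Icc (y + n - 1) (y + n - 1 + p - 1) := by
    rw [relabL_gt_Icc hn hxy]
    congr 1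
    omega
  ext T
  rw [mem_rwCompose hy' hp hrootC, mem_rwCompose hx1 hn hrootB]
  -- the common description
  have key : ∀ Q : Prop, (Q ↔
      ((∃ S₁ ∈ A, S₁ ≠ {x} ∧ S₁ ≠ {y} ∧ T = relabL x n (relabL y p S₁)) ∨
       (∃ S₂ ∈ B, S₂ ≠ Finset.Icc 1 n ∧ T = relabR x S₂) ∨
       (T = Finset.Icc x (x + n - 1) ∧ keepB n x A B) ∨
       (∃ S₃ ∈ C, S₃ ≠ Finset.Icc 1 p ∧ T = relabR (y + n - 1) S₃) ∨
       (T = Finset.Icc (y + n - 1) (y + n - 1 + p - 1) ∧ keepB p y A C))) → (Q ↔ Q) := by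
    intro Q _
    exact Iff.rfl
  clear key
  constructor
  · rintro (⟨S, hS, hSne, rfl⟩ | ⟨S₃, hS₃, hne₃, rfl⟩ | ⟨rfl, hk⟩)
    · rw [mem_rwCompose hx1 hn hrootB] at hS
      rcases hS with ⟨S₁, hS₁, hne₁, rfl⟩ | ⟨S₂, hS₂, hne₂, rfl⟩ | ⟨rfl, hk⟩
      · -- A-node
        have hne₁y : S₁ ≠ {y} := by
          rintro rfl
          exact hSne (relabL_singleton_gt hxy)
        refine Or.inl ⟨relabL y p S₁, ?_, ?_, ?_⟩
        · rw [mem_rwCompose hy1 hp hrootC]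
          refine Or.inl ⟨S₁, hS₁, hne₁y, rfl⟩
        · intro hEq
          exact hne₁ (relabL_inj hp (by rw [hEq, relabL_singleton_lt hxy]))
        · exact relabL_relabL_parallel hn hp hxy S₁
      · -- B-node
        rw [hLRx hS₂]
        refine Or.inr (Or.inl ⟨S₂, hS₂, hne₂, rfl⟩)
      · -- block Bx
        rw [hLBx]
        refine Or.inr (Or.inr ⟨rfl, hkeepR.mpr hk⟩)
    · -- C-node
      refine Or.inl ⟨relabR y S₃, ?_, ?_, (hLRy hS₃).symm⟩
      · rw [mem_rwCompose hy1 hp hrootC]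
        exact Or.inr (Or.inl ⟨S₃, hS₃, hne₃, rfl⟩)
      · intro hEq
        have hmem : x ∈ relabR y S₃ := by rw [hEq]; exact Finset.mem_singleton_self _
        have := Finset.mem_Icc.mp (relabR_subset_block hy1 (hC.1 S₃ hS₃).2 hmem)
        omega
    · -- block By'
      refine Or.inl ⟨Finset.Icc y (y + p - 1), ?_, ?_, hLBy.symm⟩
      · rw [mem_rwCompose hy1 hp hrootC]
        exact Or.inr (Or.inr ⟨rfl, hkeepL.mp hk⟩)
      · intro hEq
        have : y ∈ Finset.Icc y (y + p - 1) := Finset.mem_Icc.mpr ⟨le_rfl, by omega⟩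
        rw [hEq, Finset.mem_singleton] at this
        omega
  · rintro (⟨S, hS, hSne, rfl⟩ | ⟨S₂, hS₂, hne₂, rfl⟩ | ⟨rfl, hk⟩)
    · rw [mem_rwCompose hy1 hp hrootC] at hS
      rcases hS with ⟨S₁, hS₁, hne₁, rfl⟩ | ⟨S₃, hS₃, hne₃, rfl⟩ | ⟨rfl, hk⟩
      · -- A-node
        have hne₁x : S₁ ≠ {x} := by
          rintro rfl
          exact hSne (relabL_singleton_lt hxy)
        refine Or.inl ⟨relabL x n S₁, ?_, ?_, (relabL_relabL_parallel hn hp hxy S₁).symm⟩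
        · rw [mem_rwCompose hx1 hn hrootB]
          exact Or.inl ⟨S₁, hS₁, hne₁x, rfl⟩
        · intro hEq
          exact hne₁ (relabL_inj hn (by rw [hEq, relabL_singleton_gt hxy]))
      · -- C-node
        rw [hLRy hS₃]
        refine Or.inr (Or.inl ⟨S₃, hS₃, hne₃, rfl⟩)
      · -- block By
        rw [hLBy]
        refine Or.inr (Or.inr ⟨rfl, hkeepL.mpr hk⟩)
    · -- B-node
      refine Or.inl ⟨relabR x S₂, ?_, ?_, (hLRx hS₂).symm⟩
      · rw [mem_rwCompose hx1 hn hrootB]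
        exact Or.inr (Or.inl ⟨S₂, hS₂, hne₂, rfl⟩)
      · intro hEq
        have hmem : y + n - 1 ∈ relabR x S₂ := by rw [hEq]; exact Finset.mem_singleton_self _
        have := hBel hS₂ _ hmem
        omega
    · -- block Bx
      refine Or.inl ⟨Finset.Icc x (x + n - 1), ?_, ?_, hLBx.symm⟩
      · rw [mem_rwCompose hx1 hn hrootB]
        exact Or.inr (Or.inr ⟨rfl, hkeepR.mp hk⟩)
      · intro hEq
        have : x ∈ Finset.Icc x (x + n - 1) := Finset.mem_Icc.mpr ⟨le_rfl, by omega⟩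
        rw [hEq, Finset.mem_singleton] at this
        omega

end RW
namespace RW

lemma nested_core {m n p x t : ℕ} {A B C : Finset (Finset ℕ)}
    (hA : IsRWTree m A) (hB : IsRWTree n B) (hC : IsRWTree p C)
    (hx1 : 1 ≤ x) (hxm : x ≤ m) (ht1 : 1 ≤ t) (htn : t ≤ n)
    (hm : 2 ≤ m) (hn2 : 2 ≤ n) :
    rwCompose p (x + t - 1) (rwCompose n x A B) C
      = rwCompose (n + p - 1) x A (rwCompose p t B C) := by
  have hn := IsRWTree_one_le hB
  have hp := IsRWTree_one_le hC
  have hx' : 1 ≤ x + t - 1 := by omega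
  have hnp : 1 ≤ n + p - 1 := by omega
  have hrootB := hB.2.1
  have hrootC := hC.2.1
  have hrootD : Finset.Icc 1 (n + p - 1) ∈ rwCompose p t B C :=
    root_mem_rwCompose ht1 htn hp hn2 hB.2.1 hC.2.1
  have hIccBt : ∀ {S : Finset ℕ}, S ∈ B → S ≠ {t} → S ≠ Finset.Icc 1 n →
      True := fun _ _ _ => trivial
  clear hIccBt
  have hBtn : Finset.Icc 1 n ≠ ({t} : Finset ℕ) := by
    intro h
    have := congrArg Finset.card h
    rw [Nat.card_Icc, Finset.card_singleton] at this
    omega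
  have hcardIcc : ∀ u v : ℕ, (Finset.Icc u v).card = v + 1 - u := fun u v => Nat.card_Icc u v
  -- K3
  have hK3 : ({x + t - 1} : Finset ℕ) ∈ rwCompose n x A B ↔ ({t} : Finset ℕ) ∈ B := by
    rw [mem_rwCompose hx1 hn hrootB]
    constructor
    · rintro (⟨S₁, hS₁, hne₁, hT⟩ | ⟨S₂, hS₂, hne₂, hT⟩ | ⟨hT, _⟩)
      · exfalso
        have hx'mem : x + t - 1 ∈ relabL x n S₁ := by
          rw [← hT]; exact Finset.mem_singleton_self _
        rw [mem_relabL hn] at hx'mem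
        rcases hx'mem with ⟨j, hj, h1, h2⟩ | ⟨hxS, h1, h2⟩ | ⟨j, hj, h1, h2⟩
        · omega
        · have hsub := block_subset_relabL (n := n) hxS
          rw [← hT] at hsub
          have e1 := hsub (Finset.mem_Icc.mpr ⟨le_rfl, by omega⟩)
          have e2 := hsub (Finset.mem_Icc.mpr (⟨by omega, le_rfl⟩ :
            x + n - 1 ≥ x ∧ x + n - 1 ≤ x + n - 1))
          rw [Finset.mem_singleton] at e1 e2
          omega
        · omega
      · have : S₂ = {t} := (relabR_eq_singleton_iff hx1).mp hT.symm
        rwa [this] at hS₂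
      · exfalso
        have := congrArg Finset.card hT
        rw [Finset.card_singleton, hcardIcc] at this
        omega
    · intro h
      exact Or.inr (Or.inl ⟨{t}, h, fun hEq => hBtn hEq.symm,
        ((relabR_eq_singleton_iff hx1).mpr rfl).symm⟩)
  have hkeep1 : keepB p (x + t - 1) (rwCompose n x A B) C ↔ keepB p t B C := by
    unfold keepB
    by_cases hred : IsRed C (Finset.Icc 1 p)
    · rw [if_pos hred, if_pos hred]
      constructor
      · rintro (h | h)
        · exact Or.inl fun hmem => h (hK3.mpr hmem)
        · exact absurd h (rwCompose_ne_sing hA hB hm hx1 hxm _)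
      · rintro (h | h)
        · exact Or.inl fun hmem => h (hK3.mp hmem)
        · exact absurd h (tree_ne_sing hB hn2 _)
    · rw [if_neg hred, if_neg hred]
      exact hK3
  have hredD : IsRed (rwCompose p t B C) (Finset.Icc 1 (n + p - 1)) ↔
      IsRed B (Finset.Icc 1 n) := by
    have hIcc : relabL t p (Finset.Icc 1 n) = Finset.Icc 1 (n + p - 1) :=
      relabL_Icc hp ht1 htn
    rw [← hIcc]
    exact red_transfer_L hB hC ht1 (Finset.Icc 1 n).card (Finset.Icc 1 n) le_rfl hB.2.1 hBtn
  have hkeep2 : keepB (n + p - 1) x A (rwCompose p t B C) ↔ keepB n x A B := by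
    unfold keepB
    by_cases hred : IsRed B (Finset.Icc 1 n)
    · rw [if_pos (hredD.mpr hred), if_pos hred]
    · rw [if_neg (fun h => hred (hredD.mp h)), if_neg hred]
  -- relabelling identities
  have hLBx : relabL (x + t - 1) p (Finset.Icc x (x + n - 1)) =
      Finset.Icc x (x + (n + p - 1) - 1) := by
    rw [relabL_Icc' hp (by omega) (by omega)]
    congr 1
    omega
  have hRBt : relabR x (Finset.Icc t (t + p - 1)) =
      Finset.Icc (x + t - 1) (x + t - 1 + p - 1) := by
    rw [relabR_Icc hx1 ht1]
    congr 1
    omega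
  -- size facts for D-members
  have hDb : ∀ {S : Finset ℕ}, S ⊆ Finset.Icc t (t + p - 1) →
      S ≠ Finset.Icc 1 (n + p - 1) := by
    intro S hS hEq
    have h1 := Finset.card_le_card hS
    rw [hEq, hcardIcc, hcardIcc] at h1
    omega
  ext T
  rw [mem_rwCompose hx' hp hrootC, mem_rwCompose hx1 hnp hrootD]
  constructor
  · rintro (⟨S, hS, hSne, rfl⟩ | ⟨S₃, hS₃, hne₃, rfl⟩ | ⟨rfl, hk⟩)
    · rw [mem_rwCompose hx1 hn hrootB] at hS
      rcases hS with ⟨S₁, hS₁, hne₁, rfl⟩ | ⟨S₂, hS₂, hne₂, rfl⟩ | ⟨rfl, hk⟩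
      · -- A-node
        rw [relabL_relabL_nested hx1 ht1 htn hp]
        exact Or.inl ⟨S₁, hS₁, hne₁, rfl⟩
      · -- B-node
        rw [relabL_relabR_nested hx1 ht1 hp]
        have hne₂t : S₂ ≠ {t} := by
          rintro rfl
          exact hSne ((relabR_eq_singleton_iff hx1).mpr rfl)
        refine Or.inr (Or.inl ⟨relabL t p S₂, ?_, ?_, rfl⟩)
        · rw [mem_rwCompose ht1 hp hrootC]
          exact Or.inl ⟨S₂, hS₂, hne₂t, rfl⟩
        · intro hEq
          exact hne₂ (relabL_inj hp (by rw [hEq, relabL_Icc hp ht1 htn]))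
      · -- block Bx
        rw [hLBx]
        exact Or.inr (Or.inr ⟨rfl, hkeep2.mpr hk⟩)
    · -- C-node
      rw [show relabR (x + t - 1) S₃ = relabR x (relabR t S₃) from
        (relabR_relabR hx1 ht1 S₃).symm]
      refine Or.inr (Or.inl ⟨relabR t S₃, ?_, ?_, rfl⟩)
      · rw [mem_rwCompose ht1 hp hrootC]
        exact Or.inr (Or.inl ⟨S₃, hS₃, hne₃, rfl⟩)
      · exact hDb (relabR_subset_block ht1 (hC.1 S₃ hS₃).2)
    · -- block Bx'
      rw [show Finset.Icc (x + t - 1) (x + t - 1 + p - 1) =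
        relabR x (Finset.Icc t (t + p - 1)) from hRBt.symm]
      refine Or.inr (Or.inl ⟨Finset.Icc t (t + p - 1), ?_, ?_, rfl⟩)
      · rw [mem_rwCompose ht1 hp hrootC]
        exact Or.inr (Or.inr ⟨rfl, hkeep1.mp hk⟩)
      · exact hDb le_rfl
  · rintro (⟨S₁, hS₁, hne₁, rfl⟩ | ⟨S, hS, hSne, rfl⟩ | ⟨rfl, hk⟩)
    · -- A-node
      refine Or.inl ⟨relabL x n S₁, ?_, ?_, (relabL_relabL_nested hx1 ht1 htn hp S₁).symm⟩
      · rw [mem_rwCompose hx1 hn hrootB]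
        exact Or.inl ⟨S₁, hS₁, hne₁, rfl⟩
      · intro hEq
        have hx'mem : x + t - 1 ∈ relabL x n S₁ := by
          rw [hEq]; exact Finset.mem_singleton_self _
        rw [mem_relabL hn] at hx'mem
        rcases hx'mem with ⟨j, hj, h1, h2⟩ | ⟨hxS, h1, h2⟩ | ⟨j, hj, h1, h2⟩
        · omega
        · have hsub := block_subset_relabL (n := n) hxS
          rw [hEq] at hsub
          have e1 := hsub (Finset.mem_Icc.mpr ⟨le_rfl, by omega⟩)
          have e2 := hsub (Finset.mem_Icc.mpr (⟨by omega, le_rfl⟩ :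
            x + n - 1 ≥ x ∧ x + n - 1 ≤ x + n - 1))
          rw [Finset.mem_singleton] at e1 e2
          omega
        · omega
    · rw [mem_rwCompose ht1 hp hrootC] at hS
      rcases hS with ⟨S₂, hS₂, hne₂t, rfl⟩ | ⟨S₃, hS₃, hne₃, rfl⟩ | ⟨rfl, hk⟩
      · -- B-node
        have hne₂ : S₂ ≠ Finset.Icc 1 n := by
          rintro rfl
          exact hSne (relabL_Icc hp ht1 htn)
        refine Or.inl ⟨relabR x S₂, ?_, ?_, (relabL_relabR_nested hx1 ht1 hp S₂).symm⟩
        · rw [mem_rwCompose hx1 hn hrootB]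
          exact Or.inr (Or.inl ⟨S₂, hS₂, hne₂, rfl⟩)
        · intro hEq
          exact hne₂t ((relabR_eq_singleton_iff hx1).mp hEq)
      · -- C-node
        rw [show relabR x (relabR t S₃) = relabR (x + t - 1) S₃ from
          relabR_relabR hx1 ht1 S₃]
        exact Or.inr (Or.inl ⟨S₃, hS₃, hne₃, rfl⟩)
      · -- block Bt
        rw [hRBt]
        exact Or.inr (Or.inr ⟨rfl, hkeep1.mpr hk⟩)
    · -- block Bx (outer)
      refine Or.inl ⟨Finset.Icc x (x + n - 1), ?_, ?_, hLBx.symm⟩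
      · rw [mem_rwCompose hx1 hn hrootB]
        exact Or.inr (Or.inr ⟨rfl, hkeep2.mp hk⟩)
      · intro hEq
        have := congrArg Finset.card hEq
        rw [Finset.card_singleton, hcardIcc] at this
        omega

end RW

/-- The labelled red and white trees with the compositions `∘ₓ` form a
set-operad: the parallel and nested axioms hold (with the indices of the second
compositions shifted according to the relabelling conventions), and the single node
labelled `{1}` is a two-sided unit. -/
theorem rw_trees_operad :
    (∀ (m n p x y : ℕ) (A B C : Finset (Finset ℕ)),
        IsRWTree m A → IsRWTree n B → IsRWTree p C →
        1 ≤ x → x ≤ m → 1 ≤ y → y ≤ m → x ≠ y →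
        rwCompose p (if x < y then y + n - 1 else y) (rwCompose n x A B) C
          = rwCompose n (if y < x then x + p - 1 else x) (rwCompose p y A C) B) ∧
    (∀ (m n p x t : ℕ) (A B C : Finset (Finset ℕ)),
        IsRWTree m A → IsRWTree n B → IsRWTree p C →
        1 ≤ x → x ≤ m → 1 ≤ t → t ≤ n →
        rwCompose p (x + t - 1) (rwCompose n x A B) C
          = rwCompose (n + p - 1) x A (rwCompose p t B C)) ∧
    (∀ (n : ℕ) (G : Finset (Finset ℕ)), IsRWTree n G → rwCompose n 1 unitT G = G) ∧
    (∀ (m x : ℕ) (F : Finset (Finset ℕ)), IsRWTree m F → 1 ≤ x → x ≤ m →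
        rwCompose 1 x F unitT = F) := by
  refine ⟨?_, ?_, ?_, ?_⟩
  · -- parallel axiom
    intro m n p x y A B C hA hB hC hx1 hxm hy1 hym hxy
    rcases lt_or_gt_of_ne hxy with h | h
    · rw [if_pos h, if_neg (by omega : ¬ y < x)]
      exact RW.parallel_core hA hB hC hx1 hym h
    · rw [if_neg (by omega : ¬ x < y), if_pos h]
      exact (RW.parallel_core hA hC hB hy1 hxm h).symm
  · -- nested axiom
    intro m n p x t A B C hA hB hC hx1 hxm ht1 htn
    by_cases hn1 : n = 1
    · subst hn1
      have ht : t = 1 := by omega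
      subst ht
      have hBu : B = unitT := RW.IsRWTree_one hB
      have e1 : x + 1 - 1 = x := by omega
      have e2 : 1 + p - 1 = p := by omega
      rw [hBu, RW.rwCompose_unit_right hx1, e1, e2,
        RW.rwCompose_unit_left C hC.2.1]
    · by_cases hp1 : p = 1
      · subst hp1
        have hCu : C = unitT := RW.IsRWTree_one hC
        have e1 : n + 1 - 1 = n := by omega
        rw [hCu, RW.rwCompose_unit_right (by omega : 1 ≤ x + t - 1), e1,
          RW.rwCompose_unit_right ht1]
      · by_cases hm1 : m = 1
        · subst hm1
          have hx : x = 1 := by omega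
          subst hx
          have hAu : A = unitT := RW.IsRWTree_one hA
          have e1 : 1 + t - 1 = t := by omega
          have hn2 : 2 ≤ n := by
            have := RW.IsRWTree_one_le hB
            omega
          have hp := RW.IsRWTree_one_le hC
          rw [hAu, RW.rwCompose_unit_left B hB.2.1, e1,
            RW.rwCompose_unit_left _ (RW.root_mem_rwCompose ht1 htn hp hn2 hB.2.1 hC.2.1)]
        · have hm2 : 2 ≤ m := by
            have := RW.IsRWTree_one_le hA
            omega
          have hn2 : 2 ≤ n := by
            have := RW.IsRWTree_one_le hB
            omega
          exact RW.nested_core hA hB hC hx1 hxm ht1 htn hm2 hn2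
  · -- left unit
    intro n G hG
    exact RW.rwCompose_unit_left G hG.2.1
  · -- right unit
    intro m x F hF hx hxm
    exact RW.rwCompose_unit_right hx F
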